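/- arXiv:1205.6422 — 7 statements merged into one kernel-verified Lean document; each statement's English description precedes it below -/
import Mathlib

section
/- For a Tychonoff space X, the following are equivalent: (1) X is locally pseudocompact; (2) X ⊆ int_{βX} υX; (3) X and R(X) = cl_{βX}(βX \ υX) are disjoint; (4) ζX \ X is compact; (5) X has a pseudocompactification with compact remainder. -/
open Set Topology

/-- A zero-set: the preimage of `{0}` under a continuous real-valued function. -/
def IsZeroSet {Y : Type*} [TopologicalSpace Y] (Z : Set Y) : Prop :=
  ∃ f : C(Y, ℝ), Z = f ⁻¹' {0}

/-- A cozero-set: the complement of a zero-set. -/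
def IsCozeroSet {Y : Type*} [TopologicalSpace Y] (C : Set Y) : Prop :=
  IsZeroSet Cᶜ

/-- A space is pseudocompact if every continuous real-valued function on it is bounded. -/
def IsPseudocompact (Y : Type*) [TopologicalSpace Y] : Prop :=
  ∀ f : C(Y, ℝ), ∃ M : ℝ, ∀ y, |f y| ≤ M

/-- A subset is pseudocompact if it is pseudocompact as a subspace. -/
def IsPseudocompactSet {Y : Type*} [TopologicalSpace Y] (A : Set Y) : Prop :=
  ∀ f : C(A, ℝ), ∃ M : ℝ, ∀ a, |f a| ≤ M

/-- The Hewitt realcompactification `υX`, realized as the subspace of `βX` consisting of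
those `p ∈ βX` such that every zero-set of `βX` containing `p` meets `X`. -/
def upsilonSet (X : Type*) [TopologicalSpace X] : Set (StoneCech X) :=
  {p | ∀ Z : Set (StoneCech X), IsZeroSet Z → p ∈ Z →
    (Z ∩ Set.range (stoneCechUnit : X → StoneCech X)).Nonempty}

/-- `ζX = X ∪ cl_{βX}(βX \ υX)`, as a subset of `βX`. -/
def zetaSet (X : Type*) [TopologicalSpace X] : Set (StoneCech X) :=
  Set.range (stoneCechUnit : X → StoneCech X) ∪ closure (upsilonSet X)ᶜ

universe u

section Aux

open unitInterval

lemma psc_of_surj {A B : Type*} [TopologicalSpace A] [TopologicalSpace B] {φ : A → B}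
    (hc : Continuous φ) (hs : Function.Surjective φ) (h : IsPseudocompact A) :
    IsPseudocompact B := by
  intro f
  obtain ⟨M, hM⟩ := h (f.comp ⟨φ, hc⟩)
  exact ⟨M, fun b => by obtain ⟨a, rfl⟩ := hs b; exact hM a⟩

lemma cr_subtype {Y : Type*} [TopologicalSpace Y] [CompletelyRegularSpace Y] (s : Set Y) :
    CompletelyRegularSpace s := by
  constructor
  intro x K hK hx
  obtain ⟨C, hC, rfl⟩ := isClosed_induced_iff.mp hK
  obtain ⟨f, cf, f0, f1⟩ :=
    CompletelyRegularSpace.completely_regular (X := Y) x.1 C hC hx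
  exact ⟨f ∘ Subtype.val, cf.comp continuous_subtype_val, f0, fun y hy => f1 hy⟩

lemma isEmbedding_unit (X : Type*) [TopologicalSpace X] [T2Space X]
    [CompletelyRegularSpace X] : IsEmbedding (stoneCechUnit : X → StoneCech X) := by
  haveI : T35Space X := {}
  refine ⟨isInducing_iff_nhds.mpr fun x => le_antisymm ?_ ?_,
    injective_stoneCechUnit_of_t35Space⟩
  · exact (continuous_stoneCechUnit.tendsto x).le_comap
  · intro U hU
    obtain ⟨U', hU'U, hU'open, hxU'⟩ := mem_nhds_iff.mp hU
    obtain ⟨f, cf, f0, f1⟩ := CompletelyRegularSpace.completely_regular (X := X)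
      x U'ᶜ hU'open.isClosed_compl (by simpa using hxU')
    refine Filter.mem_comap.mpr ⟨stoneCechExtend cf ⁻¹' ({1}ᶜ), ?_, ?_⟩
    · refine IsOpen.mem_nhds (isClosed_singleton.isOpen_compl.preimage
        (continuous_stoneCechExtend cf)) ?_
      simp only [Set.mem_preimage, Set.mem_compl_iff, Set.mem_singleton_iff]
      rw [show stoneCechExtend cf (stoneCechUnit x) = f x from
        congrFun (stoneCechExtend_extends cf) x, f0]
      exact fun h => zero_ne_one (α := I) h
    · intro y hy
      simp only [Set.mem_preimage, Set.mem_compl_iff, Set.mem_singleton_iff] at hy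
      rw [show stoneCechExtend cf (stoneCechUnit y) = f y from
        congrFun (stoneCechExtend_extends cf) y] at hy
      by_contra hyU
      exact hy (f1 (fun h : y ∈ U' => hyU (hU'U h)))

lemma closure_subset_upsilon {X : Type*} [TopologicalSpace X] {A : Set (StoneCech X)}
    (hA : A ⊆ Set.range (stoneCechUnit : X → StoneCech X)) (hps : IsPseudocompactSet A) :
    closure A ⊆ upsilonSet X := by
  intro p hp Z hZ hpZ
  obtain ⟨f, rfl⟩ := hZ
  by_contra hne
  rw [Set.not_nonempty_iff_eq_empty] at hne
  have hfA : ∀ a : A, f a.1 ≠ 0 := by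
    intro a h0
    have : (a : StoneCech X) ∈ f ⁻¹' {0} ∩ Set.range stoneCechUnit := ⟨h0, hA a.2⟩
    simp [hne] at this
  have hcont : Continuous fun a : A => (f a.1)⁻¹ :=
    ((map_continuous f).comp continuous_subtype_val).inv₀ hfA
  obtain ⟨M, hM⟩ := hps ⟨_, hcont⟩
  have hopen : IsOpen {q : StoneCech X | |f q| < (|M| + 1)⁻¹} := by
    have : Continuous fun q : StoneCech X => |f q| := (map_continuous f).abs
    exact isOpen_lt this continuous_const
  have hpmem : p ∈ {q : StoneCech X | |f q| < (|M| + 1)⁻¹} := by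
    simp only [Set.mem_setOf_eq, Set.mem_preimage, Set.mem_singleton_iff] at hpZ ⊢
    rw [hpZ]
    simp
    positivity
  obtain ⟨a, haO, haA⟩ := (mem_closure_iff.mp hp) _ hopen hpmem
  have hfa := hfA ⟨a, haA⟩
  have h1 : (|M| + 1) < |f a|⁻¹ := by
    rw [lt_inv_comm₀ (by positivity) (abs_pos.mpr hfa)]
    exact haO
  have h2 : |(f a)⁻¹| ≤ M := hM ⟨a, haA⟩
  rw [← abs_inv] at h1
  have : |M| + 1 ≤ M := le_trans h1.le h2
  have : M ≤ |M| := le_abs_self M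
  linarith

lemma no_lf_family {Y : Type*} [TopologicalSpace Y] [CompletelyRegularSpace Y]
    (hY : IsPseudocompact Y) (O : ℕ → Set Y) (ho : ∀ n, IsOpen (O n))
    (hne : ∀ n, (O n).Nonempty) (hlf : LocallyFinite O) : False := by
  choose y hy using hne
  have key : ∀ n, ∃ f : Y → I, Continuous f ∧ f (y n) = 0 ∧ Set.EqOn f 1 (O n)ᶜ :=
    fun n => CompletelyRegularSpace.completely_regular (y n) (O n)ᶜ
      (ho n).isClosed_compl (fun h => h (hy n))
  choose f cf f0 f1 using key
  set g : ℕ → Y → ℝ := fun n z => (n : ℝ) * (1 - (f n z : ℝ)) with hg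
  have gcont : ∀ n, Continuous (g n) := fun n =>
    continuous_const.mul (continuous_const.sub ((continuous_induced_dom).comp (cf n)))
  have gsupp : ∀ n, Function.support (g n) ⊆ O n := by
    intro n z hz
    by_contra hzn
    apply hz
    simp [hg, f1 n hzn]
  have gnonneg : ∀ n z, 0 ≤ g n z := by
    intro n z
    have h1 : (f n z : ℝ) ≤ 1 := (f n z).2.2
    have h0 : (0:ℝ) ≤ n := Nat.cast_nonneg n
    simp only [hg]
    nlinarith
  have hlf' : LocallyFinite fun n => Function.support (g n) := hlf.subset gsupp
  have Gcont : Continuous fun z => ∑ᶠ n, g n z := continuous_finsum gcont hlf'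
  obtain ⟨M, hM⟩ := hY ⟨_, Gcont⟩
  set n := ⌈M⌉₊ + 1 with hn
  have h1 : (g n) (y n) ≤ ∑ᶠ m, g m (y n) := by
    refine single_le_finsum n ?_ (fun m => gnonneg m (y n))
    exact ((hlf.point_finite (y n)).subset (fun m hm => gsupp m hm))
  have h2 : g n (y n) = n := by simp [hg, f0 n]
  have h3 : |∑ᶠ m, g m (y n)| ≤ M := hM (y n)
  have h4 : (n : ℝ) ≤ M := by
    rw [← h2]
    exact le_trans h1 (le_trans (le_abs_self _) h3)
  have h5 : M < (n : ℝ) := by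
    calc M ≤ (⌈M⌉₊ : ℝ) := Nat.le_ceil M
    _ < n := by exact_mod_cast Nat.lt_succ_self _
  linarith

lemma psc_closure_of_isOpen {Y : Type*} [TopologicalSpace Y] [CompletelyRegularSpace Y]
    (hY : IsPseudocompact Y) {V : Set Y} (hV : IsOpen V) :
    IsPseudocompactSet (closure V) := by
  by_contra hnot
  simp only [IsPseudocompactSet, not_forall, not_exists] at hnot
  obtain ⟨φ, hφ⟩ := hnot
  have hub : ∀ n : ℕ, ∃ a : closure V, (n : ℝ) < |φ a| := by
    intro n
    obtain ⟨a, ha⟩ := hφ n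
    exact ⟨a, lt_of_not_ge ha⟩
  have hSopen : ∀ n : ℕ, IsOpen {a : closure V | (n : ℝ) < |φ a|} := fun n =>
    isOpen_lt continuous_const ((map_continuous φ).abs)
  have : ∀ n : ℕ, ∃ G : Set Y, IsOpen G ∧
      {a : closure V | (n : ℝ) < |φ a|} = Subtype.val ⁻¹' G := by
    intro n
    obtain ⟨G, hG, hGe⟩ := isOpen_induced_iff.mp (hSopen n)
    exact ⟨G, hG, hGe.symm⟩
  choose G hGopen hGeq using this
  set O : ℕ → Set Y := fun n => G n ∩ V with hO
  have hone : ∀ n, (O n).Nonempty := by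
    intro n
    obtain ⟨a, ha⟩ := hub n
    have haG : (a : Y) ∈ G n := by
      have : a ∈ {b : closure V | (n : ℝ) < |φ b|} := ha
      rwa [hGeq n] at this
    obtain ⟨z, hz1, hz2⟩ := mem_closure_iff.mp a.2 (G n) (hGopen n) haG
    exact ⟨z, hz1, hz2⟩
  have holf : LocallyFinite O := by
    intro z
    by_cases hz : z ∈ closure V
    · have hnbd : {a : closure V | |φ a| < |φ (⟨z, hz⟩ : closure V)| + 1} ∈
          𝓝 (⟨z, hz⟩ : closure V) := by
        have : IsOpen {a : closure V | |φ a| < |φ (⟨z, hz⟩ : closure V)| + 1} :=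
          isOpen_lt ((map_continuous φ).abs) continuous_const
        exact this.mem_nhds (by simp)
      rw [nhds_induced] at hnbd
      obtain ⟨H, hH, hHsub⟩ := Filter.mem_comap.mp hnbd
      refine ⟨H, hH, ?_⟩
      apply Set.Finite.subset (Set.finite_Iio (⌈|φ (⟨z, hz⟩ : closure V)| + 1⌉₊))
      intro n hn
      obtain ⟨w, hwO, hwH⟩ := hn
      have hwcl : w ∈ closure V := subset_closure hwO.2
      have hw1 : (⟨w, hwcl⟩ : closure V) ∈ {a : closure V | (n : ℝ) < |φ a|} := by
        rw [hGeq n]; exact hwO.1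
      have hw2 : |φ (⟨w, hwcl⟩ : closure V)| < |φ (⟨z, hz⟩ : closure V)| + 1 := hHsub hwH
      have : (n : ℝ) < |φ (⟨z, hz⟩ : closure V)| + 1 := lt_trans hw1 hw2
      exact Set.mem_Iio.mpr (Nat.lt_ceil.mpr this)
    · refine ⟨(closure V)ᶜ, isClosed_closure.isOpen_compl.mem_nhds hz, ?_⟩
      apply Set.Finite.subset (Set.finite_empty)
      intro n hn
      obtain ⟨w, hwO, hwc⟩ := hn
      exact absurd (subset_closure hwO.2) hwc
  exact no_lf_family hY O (fun n => (hGopen n).inter hV) hone holf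

lemma zeta_pseudocompact (X : Type*) [TopologicalSpace X] :
    IsPseudocompact (zetaSet X) := by
  intro f
  by_contra hnot
  push_neg at hnot
  have hub : ∀ n : ℕ, ∃ y : zetaSet X, (n : ℝ) < |f y| := by
    intro n
    obtain ⟨y, hy⟩ := hnot n
    exact ⟨y, hy⟩
  set h : zetaSet X → ℝ := fun y => |f y| / (1 + |f y|) with hh
  have habs : Continuous fun y : zetaSet X => |f y| := (map_continuous f).abs
  have hpos : ∀ y : zetaSet X, (0:ℝ) < 1 + |f y| := fun y => by positivity
  have hcont : Continuous h := habs.div (continuous_const.add habs) (fun y => (hpos y).ne')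
  have hmem : ∀ y : zetaSet X, h y ∈ I := by
    intro y
    constructor
    · have := abs_nonneg (f y); positivity
    · rw [div_le_one (hpos y)]; linarith [abs_nonneg (f y)]
  have hlt1 : ∀ y : zetaSet X, h y < 1 := by
    intro y
    rw [div_lt_one (hpos y)]; linarith
  set e : X → zetaSet X := fun x => ⟨stoneCechUnit x, Or.inl (Set.mem_range_self x)⟩ with he
  have econt : Continuous e := continuous_stoneCechUnit.subtype_mk _
  have edense : Dense (Set.range e) := by
    rw [dense_iff_inter_open]
    rintro U hU ⟨y, hy⟩
    obtain ⟨W, hW, hWe⟩ := isOpen_induced_iff.mp hU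
    have hWne : W.Nonempty := ⟨y.1, by rw [← hWe] at hy; exact hy⟩
    obtain ⟨x, hx⟩ := denseRange_stoneCechUnit.exists_mem_open hW hWne
    exact ⟨e x, by rw [← hWe]; exact hx, Set.mem_range_self x⟩
  set h' : X → I := fun x => ⟨h (e x), hmem (e x)⟩ with hh'
  have h'cont : Continuous h' := (hcont.comp econt).subtype_mk _
  set G := stoneCechExtend h'cont with hG
  have Gcont : Continuous G := continuous_stoneCechExtend h'cont
  have Ge : ∀ x : X, G (stoneCechUnit x) = h' x := fun x =>
    congrFun (stoneCechExtend_extends h'cont) x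
  have Geq : ∀ y : zetaSet X, (G y.1 : ℝ) = h y := by
    have hEq : (fun y : zetaSet X => G y.1) = (fun y : zetaSet X => (⟨h y, hmem y⟩ : I)) := by
      refine Continuous.ext_on edense (Gcont.comp continuous_subtype_val)
        (hcont.subtype_mk _) ?_
      rintro _ ⟨x, rfl⟩
      show G (e x).1 = (⟨h (e x), _⟩ : I)
      exact Ge x
    intro y
    exact congrArg Subtype.val (congrFun hEq y)
  haveI : Nonempty (StoneCech X) := ⟨(hub 0).choose.1⟩
  obtain ⟨p, -, hp⟩ := isCompact_univ.exists_isMaxOn Set.univ_nonempty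
    (continuous_induced_dom.comp Gcont).continuousOn
  have hp : ∀ q, (G q : ℝ) ≤ (G p : ℝ) := fun q => hp (Set.mem_univ q)
  have hGp1 : (G p : ℝ) = 1 := by
    refine le_antisymm (G p).2.2 ?_
    by_contra hc
    push_neg at hc
    set c := (G p : ℝ) with hcdef
    have hcn : ∀ n : ℕ, (n : ℝ) / (n + 1) ≤ c := by
      intro n
      obtain ⟨y, hy⟩ := hub n
      have h1 : (n : ℝ) / (n + 1) ≤ h y := by
        rw [hh]
        rw [div_le_div_iff₀ (by positivity) (hpos y)]
        nlinarith [abs_nonneg (f y), le_of_lt hy]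
      calc (n:ℝ)/(n+1) ≤ h y := h1
        _ = (G y.1 : ℝ) := (Geq y).symm
        _ ≤ c := hp y.1
    set n := ⌈c / (1 - c)⌉₊ + 1 with hn
    have h2 : (n : ℝ) ≤ c * (n + 1) := by
      have := hcn n
      rwa [div_le_iff₀ (by positivity)] at this
    have h3 : c / (1 - c) < (n : ℝ) := by
      calc c / (1-c) ≤ (⌈c/(1-c)⌉₊ : ℝ) := Nat.le_ceil _
        _ < n := by exact_mod_cast Nat.lt_succ_self _
    rw [div_lt_iff₀ (by linarith)] at h3
    nlinarith
  set Z : Set (StoneCech X) := (fun q => (G q : ℝ) - 1) ⁻¹' {0} with hZ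
  have hZzero : IsZeroSet Z := ⟨⟨fun q => (G q : ℝ) - 1,
    (continuous_induced_dom.comp Gcont).sub continuous_const⟩, rfl⟩
  have hpZ : p ∈ Z := by simp [hZ, hGp1]
  have hZX : Z ∩ Set.range (stoneCechUnit : X → StoneCech X) = ∅ := by
    rw [Set.eq_empty_iff_forall_notMem]
    rintro q ⟨hqZ, x, rfl⟩
    have : (G (stoneCechUnit x) : ℝ) = 1 := by
      simpa [hZ, sub_eq_zero] using hqZ
    rw [Ge x] at this
    exact absurd this (ne_of_lt (hlt1 (e x)))
  have hpu : p ∉ upsilonSet X := by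
    intro hpu
    obtain ⟨q, hq⟩ := hpu Z hZzero hpZ
    rw [hZX] at hq
    exact hq
  have hpz : p ∈ zetaSet X := Or.inr (subset_closure hpu)
  have := Geq ⟨p, hpz⟩
  rw [hGp1] at this
  exact absurd this.symm (ne_of_lt (hlt1 ⟨p, hpz⟩))

end Aux

/-- For a Tychonoff space `X` the following are equivalent:
(1) `X` is locally pseudocompact;
(2) `X ⊆ int_{βX} υX`;
(3) `X` and `R(X) = cl_{βX}(βX \ υX)` are disjoint;
(4) `ζX \ X` is compact;
(5) `X` has a pseudocompactification with compact remainder. -/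
theorem locallyPseudocompact_tfae (X : Type u) [TopologicalSpace X] [T2Space X]
    [CompletelyRegularSpace X] :
    List.TFAE
      [∀ x : X, ∃ U : Set X, IsOpen U ∧ x ∈ U ∧ IsPseudocompactSet (closure U),
       Set.range (stoneCechUnit : X → StoneCech X) ⊆ interior (upsilonSet X),
       Disjoint (Set.range (stoneCechUnit : X → StoneCech X)) (closure (upsilonSet X)ᶜ),
       IsCompact (zetaSet X \ Set.range (stoneCechUnit : X → StoneCech X)),
       ∃ (Y : Type u) (_ : TopologicalSpace Y), T2Space Y ∧ CompletelyRegularSpace Y ∧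
         ∃ e : X → Y, IsEmbedding e ∧ DenseRange e ∧ IsPseudocompact Y ∧
           IsCompact (Set.range e)ᶜ] := by
  have hemb : IsEmbedding (stoneCechUnit : X → StoneCech X) := isEmbedding_unit X
  tfae_have 1 → 2 := by
    intro h1
    rintro _ ⟨x, rfl⟩
    obtain ⟨U, hUopen, hxU, hUps⟩ := h1 x
    set A : Set (StoneCech X) := stoneCechUnit '' (closure U) with hA
    have hAr : A ⊆ Set.range (stoneCechUnit : X → StoneCech X) := Set.image_subset_range _ _
    have hpsA : IsPseudocompactSet A := by
      refine psc_of_surj (φ := fun a : closure U =>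
        (⟨stoneCechUnit a.1, Set.mem_image_of_mem _ a.2⟩ : A)) ?_ ?_ hUps
      · exact (continuous_stoneCechUnit.comp continuous_subtype_val).subtype_mk _
      · rintro ⟨-, u, hu, rfl⟩
        exact ⟨⟨u, hu⟩, rfl⟩
    have hclA : closure A ⊆ upsilonSet X := closure_subset_upsilon hAr hpsA
    obtain ⟨V, hVopen, hVeq⟩ := hemb.toIsInducing.isOpen_iff.mp hUopen
    have hVsub : V ⊆ closure A := by
      intro v hv
      rw [mem_closure_iff]
      intro O hO hvO
      obtain ⟨x', hx'⟩ := denseRange_stoneCechUnit.exists_mem_open (hO.inter hVopen)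
        ⟨v, hvO, hv⟩
      have hx'U : x' ∈ U := by rw [← hVeq]; exact hx'.2
      exact ⟨stoneCechUnit x', hx'.1, Set.mem_image_of_mem _ (subset_closure hx'U)⟩
    have hxV : stoneCechUnit x ∈ V := by
      have : x ∈ stoneCechUnit ⁻¹' V := by rw [hVeq]; exact hxU
      exact this
    exact interior_maximal (hVsub.trans hclA) hVopen hxV
  tfae_have 2 → 3 := by
    intro h2
    rw [closure_compl]
    exact Set.disjoint_left.mpr fun {a} ha hac => hac (h2 ha)
  tfae_have 3 → 4 := by
    intro h3
    have heq : zetaSet X \ Set.range (stoneCechUnit : X → StoneCech X) =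
        closure (upsilonSet X)ᶜ := by
      ext q
      simp only [zetaSet, Set.mem_diff, Set.mem_union]
      constructor
      · rintro ⟨hq | hq, hr⟩
        · exact absurd hq hr
        · exact hq
      · intro hq
        exact ⟨Or.inr hq, fun hr => Set.disjoint_left.mp h3 hr hq⟩
    rw [heq]
    exact isClosed_closure.isCompact
  tfae_have 4 → 5 := by
    intro h4
    haveI : CompletelyRegularSpace (zetaSet X) := cr_subtype _
    set e : X → zetaSet X := Set.codRestrict stoneCechUnit _
      (fun x => Or.inl (Set.mem_range_self x)) with he
    refine ⟨zetaSet X, inferInstance, inferInstance, inferInstance, e, ?_, ?_,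
      zeta_pseudocompact X, ?_⟩
    · exact hemb.codRestrict _ _
    · rw [DenseRange, dense_iff_inter_open]
      rintro U hU ⟨y, hy⟩
      obtain ⟨W, hW, hWe⟩ := isOpen_induced_iff.mp hU
      have hWne : W.Nonempty := ⟨y.1, by rw [← hWe] at hy; exact hy⟩
      obtain ⟨x, hx⟩ := denseRange_stoneCechUnit.exists_mem_open hW hWne
      exact ⟨e x, by rw [← hWe]; exact hx, Set.mem_range_self x⟩
    · rw [IsEmbedding.subtypeVal.isCompact_iff]
      have him : Subtype.val '' (Set.range e)ᶜ =
          zetaSet X \ Set.range (stoneCechUnit : X → StoneCech X) := by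
        ext q
        constructor
        · rintro ⟨y, hy, rfl⟩
          refine ⟨y.2, ?_⟩
          rintro ⟨x, hx⟩
          exact hy ⟨x, Subtype.ext hx⟩
        · rintro ⟨hq, hqr⟩
          refine ⟨⟨q, hq⟩, ?_, rfl⟩
          rintro ⟨x, hx⟩
          exact hqr ⟨x, congrArg Subtype.val hx⟩
      rw [him]
      exact h4
  tfae_have 5 → 1 := by
    rintro ⟨Y, tY, hT2, hCR, e, hYemb, hYdense, hpsc, hK⟩
    intro x
    have hpK : Disjoint {e x} (Set.range e)ᶜ := by
      simp only [Set.disjoint_singleton_left, Set.mem_compl_iff, not_not]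
      exact Set.mem_range_self x
    obtain ⟨V, W, hVopen, hWopen, hpV, hKW, hVW⟩ :=
      SeparatedNhds.of_isCompact_isCompact isCompact_singleton hK hpK
    have hclV : closure V ⊆ Set.range e := by
      have h1 : closure V ⊆ Wᶜ :=
        closure_minimal (Set.subset_compl_iff_disjoint_right.mpr hVW) hWopen.isClosed_compl
      intro v hv
      by_contra hvr
      exact (h1 hv) (hKW hvr)
    have hpsV : IsPseudocompactSet (closure V) := psc_closure_of_isOpen hpsc hVopen
    refine ⟨e ⁻¹' V, hVopen.preimage hYemb.continuous, hpV rfl, ?_⟩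
    have himU : e '' (e ⁻¹' V) = V := by
      rw [Set.image_preimage_eq_inter_range, Set.inter_eq_left]
      exact subset_closure.trans hclV
    have hclU : closure (e ⁻¹' V) = e ⁻¹' closure V := by
      rw [hYemb.toIsInducing.closure_eq_preimage_closure_image, himU]
    set ψ := (hYemb.toHomeomorph).symm with hψ
    have hψe : ∀ w : Set.range e, e (ψ w) = w.1 := fun w =>
      congrArg Subtype.val ((hYemb.toHomeomorph).apply_symm_apply w)
    have hmemφ : ∀ b : closure V, ψ ⟨b.1, hclV b.2⟩ ∈ closure (e ⁻¹' V) := by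
      intro b
      rw [hclU]
      show e (ψ ⟨b.1, hclV b.2⟩) ∈ closure V
      rw [hψe]
      exact b.2
    set φ : closure V → closure (e ⁻¹' V) := fun b => ⟨ψ ⟨b.1, hclV b.2⟩, hmemφ b⟩ with hφ
    have hφc : Continuous φ := by
      refine Continuous.subtype_mk ?_ _
      exact ψ.continuous.comp (continuous_subtype_val.subtype_mk _)
    have hφs : Function.Surjective φ := by
      rintro ⟨a, ha⟩
      have hae : e a ∈ closure V := by rw [hclU] at ha; exact ha
      refine ⟨⟨e a, hae⟩, ?_⟩
      apply Subtype.ext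
      show ψ ⟨e a, _⟩ = a
      exact (hYemb.toHomeomorph).symm_apply_apply a
    exact psc_of_surj hφc hφs hpsV
  tfae_finish
end

section
/- Let X be a Tychonoff space, let Y be a Tychonoff extension of X with compact remainder Y \ X, and let φ : βX → βY be the continuous extension of the identity map of X. Then φ is a quotient map, and φ is injective on βX \ φ⁻¹[Y \ X]; consequently βY coincides with the quotient space of βX obtained by contracting each fiber φ⁻¹(p), for p ∈ Y \ X, to the point p, with φ the quotient mapping. -/
open Set Topology

/-- Let `Y` be a Tychonoff extension of a Tychonoff space `X` (via the dense embedding `e`)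
with compact remainder, and let `φ : βX → βY` be the continuous extension of the identity of
`X`. Then `φ` is a quotient map and is injective outside the preimages of the points of
`Y \ X` (viewed in `βY`); hence `βY` is the quotient of `βX` obtained by contracting each
fiber `φ⁻¹(p)`, `p ∈ Y \ X`, to a point, with `φ` the quotient mapping. -/
theorem quotient_of_stoneCech_extension (X Y : Type*) [TopologicalSpace X] [T2Space X]
    [CompletelyRegularSpace X] [TopologicalSpace Y] [T2Space Y] [CompletelyRegularSpace Y]
    (e : X → Y) (he : IsEmbedding e) (hd : DenseRange e)
    (hrem : IsCompact (Set.range e)ᶜ)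
    (φ : StoneCech X → StoneCech Y) (hφ : Continuous φ)
    (hφe : ∀ x : X, φ (stoneCechUnit x) = stoneCechUnit (e x)) :
    IsQuotientMap φ ∧
      Set.InjOn φ (φ ⁻¹' ((stoneCechUnit : Y → StoneCech Y) '' (Set.range e)ᶜ))ᶜ := by
  -- surjectivity of φ
  have hsurj : Function.Surjective φ := by
    have hdYe : DenseRange (fun x : X => stoneCechUnit (e x) : X → StoneCech Y) :=
      (denseRange_stoneCechUnit.comp hd continuous_stoneCechUnit)
    have hsub : Set.range (fun x : X => stoneCechUnit (e x)) ⊆ Set.range φ := by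
      rintro _ ⟨x, rfl⟩
      exact ⟨stoneCechUnit x, hφe x⟩
    have hdense : Dense (Set.range φ) := hdYe.mono hsub
    have hclosed : IsClosed (Set.range φ) := (isCompact_range hφ).isClosed
    rw [← Set.range_eq_univ]
    exact hclosed.closure_eq ▸ hdense.closure_eq
  constructor
  · exact IsClosedMap.isQuotientMap hφ.isClosedMap hφ hsurj
  -- injectivity off the preimage of the remainder
  · intro p hp q hq hpq
    by_contra hne
    set K : Set (StoneCech Y) := (stoneCechUnit : Y → StoneCech Y) '' (Set.range e)ᶜ with hK
    have hKcl : IsClosed K := (hrem.image continuous_stoneCechUnit).isClosed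
    have hr : φ p ∉ K := hp
    rcases isEmpty_or_nonempty X with hX | hX
    · -- if X is empty, the remainder is all of Y and K is all of βY
      apply hr
      have h1 : (Set.range e)ᶜ = (Set.univ : Set Y) := by
        rw [Set.range_eq_empty e, Set.compl_empty]
      have h2 : K = Set.range (stoneCechUnit : Y → StoneCech Y) := by
        rw [hK, h1, Set.image_univ]
      have h3 : K = Set.univ := by
        rw [← hKcl.closure_eq, h2, denseRange_stoneCechUnit.closure_eq]
      rw [h3]
      trivial
    -- Urysohn function g on βX separating p and q
    obtain ⟨g, hgp, hgq, hg01⟩ := exists_continuous_zero_one_of_isClosed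
      (isClosed_singleton (x := p)) (isClosed_singleton (x := q))
      (disjoint_singleton.mpr hne)
    -- Urysohn function h on βY: 0 on K, 1 at φ p
    obtain ⟨h, hhK, hhr, hh01⟩ := exists_continuous_zero_one_of_isClosed hKcl
      (isClosed_singleton (x := φ p)) (disjoint_singleton_right.mpr hr)
    -- the function w on Y
    set w : Y → ℝ := fun y => h (stoneCechUnit y) * g (stoneCechUnit (Function.invFun e y))
      with hw
    have hwmem : ∀ y, w y ∈ Set.Icc (0 : ℝ) 1 := by
      intro y
      have h1 := hh01 (stoneCechUnit y)
      have h2 := hg01 (stoneCechUnit (Function.invFun e y))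
      exact ⟨mul_nonneg h1.1 h2.1, mul_le_one₀ h1.2 h2.1 h2.2⟩
    have hopen : IsOpen (Set.range e) := by
      simpa using hrem.isClosed.isOpen_compl
    have hwc : Continuous w := by
      rw [continuous_iff_continuousAt]
      intro y
      by_cases hy : y ∈ Set.range e
      · -- continuous on the open set range e
        have hcG : ContinuousOn (fun y => g (stoneCechUnit (Function.invFun e y)))
            (Set.range e) := by
          rw [continuousOn_iff_continuous_restrict]
          have hres : Set.domRestrict (Set.range e)
                (fun y => g (stoneCechUnit (Function.invFun e y)))
              = fun z => g (stoneCechUnit (he.toHomeomorph.symm z)) := by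
            funext z
            obtain ⟨y, ⟨x, rfl⟩⟩ := z
            have h1 : Function.invFun e (e x) = x :=
              Function.leftInverse_invFun he.injective x
            have h2 : he.toHomeomorph.symm ⟨e x, ⟨x, rfl⟩⟩ = x := by
              apply he.injective
              exact congrArg Subtype.val
                (he.toHomeomorph.apply_symm_apply ⟨e x, ⟨x, rfl⟩⟩)
            simp only [Set.domRestrict_apply, h1, h2]
          rw [hres]
          exact g.continuous.comp (continuous_stoneCechUnit.comp
            he.toHomeomorph.symm.continuous)
        have hcw : ContinuousOn w (Set.range e) :=
          ((h.continuous.comp continuous_stoneCechUnit).continuousOn).mul hcG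
        exact hcw.continuousAt (hopen.mem_nhds hy)
      · -- squeeze to 0
        have hy0 : h (stoneCechUnit y) = 0 := hhK ⟨y, hy, rfl⟩
        have hwy : w y = 0 := by simp [hw, hy0]
        rw [ContinuousAt, hwy]
        apply squeeze_zero_norm (a := fun y' => h (stoneCechUnit y'))
        · intro y'
          have h1 := hh01 (stoneCechUnit y')
          have h2 := hg01 (stoneCechUnit (Function.invFun e y'))
          rw [Real.norm_eq_abs, abs_mul, abs_of_nonneg h1.1, abs_of_nonneg h2.1]
          calc h (stoneCechUnit y') * g (stoneCechUnit (Function.invFun e y'))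
              ≤ h (stoneCechUnit y') * 1 := mul_le_mul_of_nonneg_left h2.2 h1.1
            _ = h (stoneCechUnit y') := mul_one _
        · have htd := (h.continuous.comp continuous_stoneCechUnit).continuousAt (x := y)
          simpa [ContinuousAt, Function.comp_def, hy0] using htd
    -- extend w to βY (via Icc 0 1)
    have hw₂c : Continuous (fun y => (⟨w y, hwmem y⟩ : Set.Icc (0 : ℝ) 1)) :=
      hwc.subtype_mk _
    set W : StoneCech Y → ℝ :=
      fun t => ((stoneCechExtend hw₂c t : Set.Icc (0 : ℝ) 1) : ℝ) with hW
    have hWc : Continuous W := continuous_subtype_val.comp (continuous_stoneCechExtend hw₂c)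
    have hWunit : ∀ y, W (stoneCechUnit y) = w y := fun y =>
      congrArg Subtype.val (congrFun (stoneCechExtend_extends hw₂c) y)
    -- the two functions on βX agree on the dense range of stoneCechUnit
    have hkey : (fun t => W (φ t)) = fun t => h (φ t) * g t := by
      apply Continuous.ext_on denseRange_stoneCechUnit (hWc.comp hφ)
        ((h.continuous.comp hφ).mul g.continuous)
      rintro _ ⟨x, rfl⟩
      have h1 : Function.invFun e (e x) = x := Function.leftInverse_invFun he.injective x
      simp only [Pi.mul_apply, Function.comp_apply, hφe x, hWunit, hw, h1]
    have hp0 : W (φ p) = 0 := by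
      have hcp := congrFun hkey p
      rw [hcp, hgp rfl, hhr rfl]
      simp
    have hq1 : W (φ q) = 1 := by
      have hcq := congrFun hkey q
      rw [hcq, hgq rfl, ← hpq, hhr rfl]
      simp
    rw [hpq, hq1] at hp0
    exact one_ne_zero hp0
end

section
/- Let X be a Tychonoff space, let Y be a Tychonoff extension of X with compact remainder Y \ X, let K be a compactification of Y, and let φ : βX → K be the continuous extension of the identity map of X. Then Y is pseudocompact if and only if cl_{βX}(βX \ υX) ⊆ φ⁻¹[Y \ X]. -/
open Set Topology

/-- Let `Y` be a Tychonoff extension of a Tychonoff space `X` (via the dense embedding `e`)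
with compact remainder, let `K` be a compactification of `Y` (via the dense embedding `j`),
and let `φ : βX → K` be the continuous extension of the identity of `X`. Then `Y` is
pseudocompact if and only if `cl_{βX}(βX \ υX) ⊆ φ⁻¹[Y \ X]`. -/
theorem pseudocompact_iff_closure_subset_preimage (X Y K : Type*) [TopologicalSpace X]
    [T2Space X] [CompletelyRegularSpace X] [TopologicalSpace Y] [T2Space Y]
    [CompletelyRegularSpace Y] [TopologicalSpace K] [CompactSpace K] [T2Space K]
    (e : X → Y) (he : IsEmbedding e) (hd : DenseRange e)
    (hrem : IsCompact (Set.range e)ᶜ)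
    (j : Y → K) (hj : IsEmbedding j) (hjd : DenseRange j)
    (φ : StoneCech X → K) (hφ : Continuous φ)
    (hφe : ∀ x : X, φ (stoneCechUnit x) = j (e x)) :
    IsPseudocompact Y ↔ closure (upsilonSet X)ᶜ ⊆ φ ⁻¹' (j '' (Set.range e)ᶜ) := by
  classical
  have hXopen : IsOpen (Set.range e) := by
    have h1 := hrem.isClosed
    rw [← isOpen_compl_iff, compl_compl] at h1
    exact h1
  have hKcl : IsClosed (j '' (Set.range e)ᶜ) := (hrem.image hj.continuous).isClosed
  constructor
  · -- pseudocompact → inclusion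
    intro hps
    refine closure_minimal ?_ (hKcl.preimage hφ)
    intro p hp
    by_contra hc
    simp only [upsilonSet, mem_compl_iff, mem_setOf_eq] at hp
    push_neg at hp
    obtain ⟨Z, hZ, hpZ, hZX⟩ := hp
    obtain ⟨g₀, rfl⟩ := hZ
    obtain ⟨f, hf0, hf1, hf01⟩ :=
      exists_continuous_zero_one_of_isClosed hKcl (isClosed_singleton (x := φ p))
        (Set.disjoint_singleton_right.mpr hc)
    set a : Y → ℝ := fun y => f (j y) with ha
    have haC : Continuous a := f.continuous.comp hj.continuous
    have ha0 : ∀ y, 0 ≤ a y := fun y => (hf01 (j y)).1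
    have ha1 : ∀ y, a y ≤ 1 := fun y => (hf01 (j y)).2
    have harem : ∀ y, y ∉ Set.range e → a y = 0 := by
      intro y hy
      have := hf0 ⟨y, hy, rfl⟩
      simpa using this
    set g : StoneCech X → ℝ := fun q => |g₀ q| with hg
    have hgC : Continuous g := continuous_abs.comp g₀.continuous
    have hgp : g p = 0 := by
      have : g₀ p = 0 := by simpa using hpZ
      simp [hg, this]
    have hgpos : ∀ x : X, 0 < g (stoneCechUnit x) := by
      intro x
      have h0 : g₀ (stoneCechUnit x) ≠ 0 := by
        intro h0
        have hmem : stoneCechUnit x ∈ (⇑g₀ ⁻¹' {0} ∩ Set.range stoneCechUnit) :=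
          ⟨by simpa using h0, ⟨x, rfl⟩⟩
        rw [hZX] at hmem
        exact hmem
      simpa [hg] using abs_pos.mpr h0
    set homeo := he.toHomeomorph with hhomeo
    set G : Y → ℝ := fun y =>
      if h : y ∈ Set.range e then g (stoneCechUnit (homeo.symm ⟨y, h⟩)) else 0 with hGdef
    have hG0 : ∀ y, 0 ≤ G y := by
      intro y
      by_cases h : y ∈ Set.range e
      · simp only [hGdef, dif_pos h]
        exact abs_nonneg _
      · simp only [hGdef, dif_neg h]
        exact le_rfl
    have hGe : ∀ x : X, G (e x) = g (stoneCechUnit x) := by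
      intro x
      have hmem : e x ∈ Set.range e := ⟨x, rfl⟩
      have hsymm : homeo.symm ⟨e x, hmem⟩ = x := by
        apply he.injective
        exact congrArg Subtype.val (homeo.apply_symm_apply ⟨e x, hmem⟩)
      simp only [hGdef, dif_pos hmem, hsymm]
    set F : Y → ℝ := fun y => a y / (G y + 1 - a y) with hF
    have hFc : Continuous F := by
      rw [continuous_iff_continuousAt]
      intro y
      by_cases hy : y ∈ Set.range e
      · have hGon : ContinuousOn G (Set.range e) := by
          rw [continuousOn_iff_continuous_restrict]
          have hres : (Set.range e).domRestrict G =
              fun z => g (stoneCechUnit (homeo.symm z)) := by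
            funext z
            simp only [Set.domRestrict_apply, hGdef, dif_pos z.2]
          rw [hres]
          exact hgC.comp (continuous_stoneCechUnit.comp homeo.symm.continuous)
        have hdne : ∀ z ∈ Set.range e, G z + 1 - a z ≠ 0 := by
          rintro z ⟨x, rfl⟩
          have h1 := hGe x
          have h2 := hgpos x
          have h3 := ha1 (e x)
          intro h4
          rw [h1] at h4
          linarith
        have hcon : ContinuousOn F (Set.range e) :=
          haC.continuousOn.div ((hGon.add continuousOn_const).sub haC.continuousOn) hdne
        exact hcon.continuousAt (hXopen.mem_nhds hy)
      · have hay : a y = 0 := harem y hy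
        have hF0 : F y = 0 := by simp [hF, hay]
        have hFnn : ∀ z, 0 ≤ F z := by
          intro z
          apply div_nonneg (ha0 z)
          have := hG0 z
          have := ha1 z
          linarith
        have hev : ∀ᶠ z in 𝓝 y, a z < 1 / 2 := by
          have h2 : Filter.Tendsto a (𝓝 y) (𝓝 (a y)) := haC.continuousAt
          rw [hay] at h2
          exact h2 (Iio_mem_nhds (by norm_num))
        have hle : ∀ᶠ z in 𝓝 y, F z ≤ 2 * a z := by
          filter_upwards [hev] with z hz
          have hd2 : (1 : ℝ) / 2 ≤ G z + 1 - a z := by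
            have := hG0 z
            linarith
          have hdpos : (0 : ℝ) < G z + 1 - a z := by linarith
          rw [hF]
          rw [div_le_iff₀ hdpos]
          nlinarith [mul_le_mul_of_nonneg_left hd2 (by linarith [ha0 z] : (0:ℝ) ≤ 2 * a z)]
        have htend : Filter.Tendsto (fun z => 2 * a z) (𝓝 y) (𝓝 0) := by
          have h2 : Filter.Tendsto a (𝓝 y) (𝓝 (a y)) := haC.continuousAt
          rw [hay] at h2
          simpa using h2.const_mul 2
        have hT : Filter.Tendsto F (𝓝 y) (𝓝 0) :=
          squeeze_zero' (Filter.Eventually.of_forall hFnn) hle htend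
        rw [ContinuousAt, hF0]
        exact hT
    obtain ⟨M, hM⟩ := hps ⟨F, hFc⟩
    have hsub : Set.range (stoneCechUnit : X → StoneCech X) ⊆
        {q | f (φ q) - M * (g q + 1 - f (φ q)) ≤ 0} := by
      rintro _ ⟨x, rfl⟩
      have hdpos : 0 < G (e x) + 1 - a (e x) := by
        have h1 := hGe x
        have h2 := hgpos x
        have h3 := ha1 (e x)
        rw [h1]
        linarith
      have h2 : F (e x) ≤ M := (le_abs_self _).trans (hM (e x))
      have h3 : a (e x) / (G (e x) + 1 - a (e x)) ≤ M := h2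
      have h4 : a (e x) ≤ M * (G (e x) + 1 - a (e x)) := (div_le_iff₀ hdpos).mp h3
      have h5 : a (e x) = f (j (e x)) := rfl
      have h6 : G (e x) = g (stoneCechUnit x) := hGe x
      rw [mem_setOf_eq, hφe x]
      rw [h5, h6] at h4
      linarith
    have hΦc : Continuous fun q => f (φ q) - M * (g q + 1 - f (φ q)) := by
      have h1 : Continuous fun q => f (φ q) := f.continuous.comp hφ
      exact h1.sub (continuous_const.mul (((hgC.add continuous_const).sub h1)))
    have hall : p ∈ {q | f (φ q) - M * (g q + 1 - f (φ q)) ≤ 0} := by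
      have hclosed : IsClosed {q | f (φ q) - M * (g q + 1 - f (φ q)) ≤ 0} :=
        isClosed_le hΦc continuous_const
      have hcl := closure_minimal hsub hclosed
      exact hcl (by rw [denseRange_stoneCechUnit.closure_eq]; trivial)
    have h1 : f (φ p) = 1 := by simpa using hf1 (mem_singleton _)
    rw [mem_setOf_eq, h1, hgp] at hall
    linarith
  · -- inclusion → pseudocompact
    intro hsub fY
    by_contra hnb
    push_neg at hnb
    obtain ⟨M₁, hM₁⟩ := (hrem.image (continuous_abs.comp fY.continuous)).bddAbove
    have hx : ∀ n : ℕ, ∃ x : X, (n : ℝ) ≤ |fY (e x)| := by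
      intro n
      obtain ⟨y, hy⟩ := hnb (max M₁ n)
      have hyr : y ∈ Set.range e := by
        by_contra hyn
        have h1 : |fY y| ≤ M₁ := hM₁ ⟨y, hyn, rfl⟩
        have h2 := le_max_left M₁ (n : ℝ)
        linarith
      obtain ⟨x, rfl⟩ := hyr
      exact ⟨x, le_of_lt (lt_of_le_of_lt (le_max_right _ _) hy)⟩
    have hhc : Continuous fun x : X => (1 : ℝ) / (1 + |fY (e x)|) := by
      apply Continuous.div continuous_const
      · exact continuous_const.add (continuous_abs.comp (fY.continuous.comp he.continuous))
      · intro x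
        positivity
    have hmem01 : ∀ x : X, (1 : ℝ) / (1 + |fY (e x)|) ∈ Set.Icc (0 : ℝ) 1 := by
      intro x
      constructor
      · positivity
      · rw [div_le_one (by positivity)]
        have := abs_nonneg (fY (e x))
        linarith
    set h : X → Set.Icc (0 : ℝ) 1 := fun x => ⟨1 / (1 + |fY (e x)|), hmem01 x⟩ with hh
    have hhcont : Continuous h := hhc.subtype_mk _
    set H : StoneCech X → ℝ := fun q => ((stoneCechExtend hhcont q : Set.Icc (0 : ℝ) 1) : ℝ)
      with hH
    have hHc : Continuous H := continuous_subtype_val.comp (continuous_stoneCechExtend hhcont)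
    have hHunit : ∀ x : X, H (stoneCechUnit x) = 1 / (1 + |fY (e x)|) := by
      intro x
      have h1 := congrFun (stoneCechExtend_extends hhcont) x
      simp only [Function.comp_apply] at h1
      show ((stoneCechExtend hhcont (stoneCechUnit x) : Set.Icc (0 : ℝ) 1) : ℝ)
        = 1 / (1 + |fY (e x)|)
      rw [h1]
    have hH0 : ∀ q, 0 ≤ H q := fun q => (stoneCechExtend hhcont q).2.1
    set C : ℕ → Set (StoneCech X) := fun n => {q | H q ≤ 1 / ((n : ℝ) + 1)} with hC
    have hCne : ∀ n, (C n).Nonempty := by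
      intro n
      obtain ⟨x, hxn⟩ := hx n
      refine ⟨stoneCechUnit x, ?_⟩
      show H (stoneCechUnit x) ≤ 1 / ((n : ℝ) + 1)
      rw [hHunit x]
      apply one_div_le_one_div_of_le (by positivity)
      linarith
    have hCcl : ∀ n, IsClosed (C n) := fun n => isClosed_le hHc continuous_const
    have hCsub : ∀ n, C (n + 1) ⊆ C n := by
      intro n q hq
      have h1 : H q ≤ 1 / ((n : ℝ) + 1 + 1) := by
        have := hq
        simp only [hC, mem_setOf_eq] at this ⊢
        push_cast at this
        linarith
      refine le_trans h1 ?_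
      apply one_div_le_one_div_of_le (by positivity)
      linarith
    obtain ⟨p, hp⟩ := IsCompact.nonempty_iInter_of_sequence_nonempty_isCompact_isClosed C
      hCsub hCne (hCcl 0).isCompact hCcl
    have hHp : H p = 0 := by
      refine le_antisymm ?_ (hH0 p)
      by_contra hpos
      push_neg at hpos
      obtain ⟨n, hn⟩ := exists_nat_one_div_lt hpos
      have h1 : H p ≤ 1 / ((n : ℝ) + 1) := Set.mem_iInter.mp hp n
      linarith
    have hpu : p ∉ upsilonSet X := by
      intro hpu
      obtain ⟨q, hqZ, hqr⟩ := hpu (H ⁻¹' {0}) ⟨⟨H, hHc⟩, rfl⟩ hHp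
      obtain ⟨x, rfl⟩ := hqr
      have h1 : H (stoneCechUnit x) = 0 := hqZ
      rw [hHunit x] at h1
      have h2 : (0 : ℝ) < 1 / (1 + |fY (e x)|) := by positivity
      linarith
    obtain ⟨y₀, hy₀r, hjy₀⟩ := hsub (subset_closure hpu)
    have hc0 : (0 : ℝ) < 1 / (1 + |fY y₀|) := by positivity
    set c : ℝ := 1 / (1 + |fY y₀|) with hcdef
    have hVopen : IsOpen {y : Y | c / 2 < 1 / (1 + |fY y|)} := by
      apply isOpen_lt continuous_const
      apply Continuous.div continuous_const
      · exact continuous_const.add (continuous_abs.comp fY.continuous)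
      · intro y
        positivity
    obtain ⟨W, hWopen, hWpre⟩ := hj.isInducing.isOpen_iff.mp hVopen
    have hpU : p ∈ φ ⁻¹' W := by
      show φ p ∈ W
      rw [← hjy₀]
      have h1 : y₀ ∈ j ⁻¹' W := by
        rw [hWpre]
        show c / 2 < 1 / (1 + |fY y₀|)
        rw [← hcdef]
        linarith
      exact h1
    have hsubS : φ ⁻¹' W ∩ Set.range (stoneCechUnit : X → StoneCech X) ⊆
        {q | c / 2 ≤ H q} := by
      rintro _ ⟨hqW, x, rfl⟩
      have h1 : j (e x) ∈ W := by
        rw [← hφe x]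
        exact hqW
      have h2 : e x ∈ j ⁻¹' W := h1
      rw [hWpre] at h2
      have h3 : c / 2 < 1 / (1 + |fY (e x)|) := h2
      rw [mem_setOf_eq, hHunit x]
      linarith
    have hclS : IsClosed {q | c / 2 ≤ H q} := isClosed_le continuous_const hHc
    have hpS : p ∈ {q | c / 2 ≤ H q} := by
      have h3 : p ∈ closure (φ ⁻¹' W ∩ Set.range stoneCechUnit) :=
        denseRange_stoneCechUnit.open_subset_closure_inter (hWopen.preimage hφ) hpU
      exact closure_minimal hsubS hclS h3
    rw [mem_setOf_eq, hHp] at hpS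
    linarith
end

section
/- Let X be a locally pseudocompact Tychonoff space, let K be a compactification of X, and let φ : βX → K be the continuous extension of the identity map of X. Then φ[ζX] is the smallest (with respect to set inclusion) pseudocompactification of X with compact remainder contained in K; that is, φ[ζX] is a pseudocompactification of X with compact remainder, and every pseudocompactification Y ⊆ K of X with compact remainder satisfies φ[ζX] ⊆ Y. -/
open Set Topology

section Aux

/-- If a nonnegative continuous function on a compact space takes values `≤ 1/(n+1)` on a
closed set `S` for every `n`, it has a zero on `S`. -/
lemma aux_exists_zero {B : Type*} [TopologicalSpace B] [CompactSpace B]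
    {S : Set B} (hS : IsClosed S) {h : B → ℝ} (hh : Continuous h) (h0 : ∀ t, 0 ≤ h t)
    (hex : ∀ n : ℕ, ∃ t ∈ S, h t ≤ ((n : ℝ) + 1)⁻¹) : ∃ t ∈ S, h t = 0 := by
  set E : ℕ → Set B := fun n => S ∩ {t | h t ≤ ((n : ℝ) + 1)⁻¹} with hE
  have hEc : ∀ n, IsClosed (E n) := fun n => hS.inter (isClosed_le hh continuous_const)
  have hEd : ∀ n, E (n + 1) ⊆ E n := by
    intro n t ht
    refine ⟨ht.1, show h t ≤ _ from le_trans ht.2 ?_⟩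
    have h1 : (0:ℝ) < (n:ℝ) + 1 := by positivity
    have h2 : ((n:ℝ)) + 1 ≤ ((n:ℝ) + 1) + 1 := by linarith
    have := one_div_le_one_div_of_le h1 h2
    simpa [one_div] using this
  have hEn : ∀ n, (E n).Nonempty := by
    intro n
    obtain ⟨t, htS, ht⟩ := hex n
    exact ⟨t, htS, ht⟩
  obtain ⟨t, ht⟩ := IsCompact.nonempty_iInter_of_sequence_nonempty_isCompact_isClosed E hEd hEn
    ((hEc 0).isCompact) hEc
  simp only [Set.mem_iInter] at ht
  refine ⟨t, (ht 0).1, le_antisymm ?_ (h0 t)⟩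
  have key : ∀ n : ℕ, h t ≤ ((n : ℝ) + 1)⁻¹ := fun n => (ht n).2
  by_contra hc
  push_neg at hc
  obtain ⟨n, hn⟩ := exists_nat_gt (h t)⁻¹
  have hpos : (0:ℝ) < (n:ℝ) + 1 := by positivity
  have h1 : h t * (h t)⁻¹ = 1 := mul_inv_cancel₀ (ne_of_gt hc)
  have h2 : ((n:ℝ) + 1) * ((n:ℝ) + 1)⁻¹ = 1 := mul_inv_cancel₀ (ne_of_gt hpos)
  nlinarith [key n, mul_lt_mul_of_pos_left hn hc]

variable {X : Type*} [TopologicalSpace X]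

/-- The closure in `βX` of the image of a pseudocompact subset of `X` lies in `υX`. -/
lemma aux_closure_image_subset_upsilonSet {P : Set X} (hP : IsPseudocompactSet P) :
    closure (stoneCechUnit '' P) ⊆ upsilonSet X := by
  intro q hq Z hZ hqZ
  by_contra hne
  rw [Set.not_nonempty_iff_eq_empty] at hne
  obtain ⟨F, rfl⟩ := hZ
  have hF0 : ∀ x : X, F (stoneCechUnit x) ≠ 0 := by
    intro x hx
    have : stoneCechUnit x ∈ (F ⁻¹' {0} ∩ Set.range (stoneCechUnit : X → StoneCech X)) :=
      ⟨by simpa using hx, ⟨x, rfl⟩⟩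
    rw [hne] at this
    exact this
  have hPne : (stoneCechUnit '' P).Nonempty := by
    rw [← closure_nonempty_iff]; exact ⟨q, hq⟩
  obtain ⟨_, y₀, hy₀, rfl⟩ := hPne
  set h : C(P, ℝ) := ⟨fun y => (F (stoneCechUnit (y : X)))⁻¹,
    Continuous.inv₀ (F.continuous.comp (continuous_stoneCechUnit.comp continuous_subtype_val))
      (fun y => hF0 y)⟩ with hh
  obtain ⟨M, hM⟩ := hP h
  have hMpos : 0 < M := by
    refine lt_of_lt_of_le ?_ (hM ⟨y₀, hy₀⟩)
    show (0:ℝ) < |(F (stoneCechUnit y₀))⁻¹|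
    exact abs_pos.mpr (inv_ne_zero (hF0 y₀))
  have hbound : ∀ y ∈ P, M⁻¹ ≤ |F (stoneCechUnit y)| := by
    intro y hy
    have h1 : |F (stoneCechUnit y)|⁻¹ ≤ M := by
      have := hM ⟨y, hy⟩
      simpa [hh, abs_inv] using this
    have h2 : 0 < |F (stoneCechUnit y)| := abs_pos.mpr (hF0 y)
    have := one_div_le_one_div_of_le (inv_pos.mpr h2) (by simpa [one_div] using h1)
    simpa [one_div] using this
  have hclosed : closure (stoneCechUnit '' P) ⊆ {t : StoneCech X | M⁻¹ ≤ |F t|} := by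
    apply closure_minimal
    · rintro _ ⟨y, hy, rfl⟩
      exact hbound y hy
    · exact isClosed_le continuous_const F.continuous.abs
  have h3 : M⁻¹ ≤ |F q| := hclosed hq
  have h4 : F q = 0 := by simpa using hqZ
  rw [h4] at h3
  simp only [abs_zero] at h3
  exact absurd h3 (not_le.mpr (inv_pos.mpr hMpos))

variable {K : Type*} [TopologicalSpace K]

/-- Local pseudocompactness: every point of `X` has a `K`-open neighbourhood whose
`φ`-preimage lies inside `υX`. -/
lemma aux_nbhd [T2Space K]
    (hlp : ∀ x : X, ∃ U : Set X, IsOpen U ∧ x ∈ U ∧ IsPseudocompactSet (closure U))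
    (k : X → K) (hk : IsEmbedding k)
    (φ : StoneCech X → K) (hφ : Continuous φ) (hφk : ∀ x : X, φ (stoneCechUnit x) = k x)
    (x : X) : ∃ W : Set K, IsOpen W ∧ k x ∈ W ∧ φ ⁻¹' W ⊆ upsilonSet X := by
  obtain ⟨U, hUo, hxU, hUp⟩ := hlp x
  refine ⟨(closure (k '' (closure U)ᶜ))ᶜ, isClosed_closure.isOpen_compl, ?_, ?_⟩
  · intro hmem
    have hx2 : x ∈ closure ((closure U)ᶜ) := by
      rw [hk.closure_eq_preimage_closure_image]
      exact hmem
    rw [closure_compl] at hx2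
    exact hx2 (interior_maximal subset_closure hUo hxU)
  · intro t ht
    apply aux_closure_image_subset_upsilonSet hUp
    have hWo : IsOpen (φ ⁻¹' (closure (k '' (closure U)ᶜ))ᶜ) :=
      (isClosed_closure.isOpen_compl).preimage hφ
    have h1 : φ ⁻¹' (closure (k '' (closure U)ᶜ))ᶜ ⊆
        closure ((φ ⁻¹' (closure (k '' (closure U)ᶜ))ᶜ) ∩
          Set.range (stoneCechUnit : X → StoneCech X)) :=
      denseRange_stoneCechUnit.open_subset_closure_inter hWo
    refine closure_mono ?_ (h1 ht)
    rintro _ ⟨htW, x', rfl⟩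
    refine ⟨x', ?_, rfl⟩
    by_contra hx'
    apply htW
    show φ (stoneCechUnit x') ∈ closure (k '' (closure U)ᶜ)
    rw [hφk]
    exact subset_closure ⟨x', hx', rfl⟩

/-- The key lemma: if `Y ⊇ X` is a pseudocompact subset of `K` and `g` is a nonnegative
continuous function on `βX` vanishing somewhere but with `φ`-image of its zero-set
disjoint from `Y`, we get a contradiction. -/
lemma aux_core [CompactSpace K] [T2Space K]
    (k : X → K) (hk : IsEmbedding k) (hkd : DenseRange k)
    (φ : StoneCech X → K) (hφ : Continuous φ) (hφk : ∀ x : X, φ (stoneCechUnit x) = k x)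
    (Y : Set K) (hY1 : Set.range k ⊆ Y) (hY3 : IsPseudocompactSet Y)
    (g : C(StoneCech X, ℝ)) (hg0 : ∀ t, 0 ≤ g t)
    (hZne : ∃ t, g t = 0) (hZY : ∀ t, g t = 0 → φ t ∉ Y) : False := by
  obtain ⟨p₀, hp₀⟩ := hZne
  set D : ℕ → Set K := fun n => φ '' {t | g t ≤ ((n : ℝ) + 1)⁻¹} with hD
  have hDcl : ∀ n, IsClosed (D n) :=
    fun n => (((isClosed_le g.continuous continuous_const).isCompact).image hφ).isClosed
  have hDmono : ∀ {m n : ℕ}, m ≤ n → D n ⊆ D m := by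
    intro m n hmn
    apply Set.image_mono
    intro t ht
    show g t ≤ ((m:ℝ) + 1)⁻¹
    refine le_trans (show g t ≤ _ from ht) ?_
    have h1 : (0:ℝ) < (m:ℝ) + 1 := by positivity
    have h2 : ((m:ℝ)) + 1 ≤ ((n:ℝ)) + 1 := by
      have : (m:ℝ) ≤ n := by exact_mod_cast hmn
      linarith
    have := one_div_le_one_div_of_le h1 h2
    simpa [one_div] using this
  -- pick points of X deep inside the sets where g is small
  have hxs : ∀ n : ℕ, ∃ x : X, g (stoneCechUnit x) < ((n:ℝ) + 1)⁻¹ := by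
    intro n
    have hopen : IsOpen {t : StoneCech X | g t < ((n:ℝ) + 1)⁻¹} :=
      isOpen_lt g.continuous continuous_const
    have hne : {t : StoneCech X | g t < ((n:ℝ) + 1)⁻¹}.Nonempty :=
      ⟨p₀, show g p₀ < ((n:ℝ) + 1)⁻¹ by rw [hp₀]; positivity⟩
    obtain ⟨x, hx⟩ := denseRange_stoneCechUnit.exists_mem_open hopen hne
    exact ⟨x, hx⟩
  choose xs hxs using hxs
  -- open sets of K tracing the sets where g∘u is small
  have hV : ∀ n : ℕ, ∃ V : Set K, IsOpen V ∧
      k ⁻¹' V = {x : X | g (stoneCechUnit x) < ((n:ℝ) + 1)⁻¹} := by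
    intro n
    have hOopen : IsOpen {x : X | g (stoneCechUnit x) < ((n:ℝ) + 1)⁻¹} :=
      isOpen_lt (g.continuous.comp continuous_stoneCechUnit) continuous_const
    obtain ⟨V, hVo, hVk⟩ := (hk.toIsInducing.isOpen_iff).mp hOopen
    exact ⟨V, hVo, hVk⟩
  choose V hVo hVk using hV
  have hVD : ∀ n, V n ⊆ D n := by
    intro n
    have h1 : V n ⊆ closure (V n ∩ Set.range k) :=
      hkd.open_subset_closure_inter (hVo n)
    refine h1.trans (closure_minimal ?_ (hDcl n))
    rintro _ ⟨hqV, x, rfl⟩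
    have hx : x ∈ k ⁻¹' V n := hqV
    rw [hVk n] at hx
    exact ⟨stoneCechUnit x, show g (stoneCechUnit x) ≤ _ from le_of_lt hx, hφk x⟩
  have hyV : ∀ n, k (xs n) ∈ V n := by
    intro n
    have : xs n ∈ k ⁻¹' V n := by rw [hVk n]; exact hxs n
    exact this
  -- every point of Y escapes some D N
  have hkey : ∀ q ∈ Y, ∃ N : ℕ, q ∉ D N := by
    intro q hq
    by_contra hcon
    push_neg at hcon
    have hfib : ∀ n : ℕ, ∃ t ∈ φ ⁻¹' ({q} : Set K), g t ≤ ((n:ℝ) + 1)⁻¹ := by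
      intro n
      obtain ⟨t, hts, htq⟩ := hcon n
      exact ⟨t, by simp [htq], hts⟩
    obtain ⟨t, htS, ht0⟩ := aux_exists_zero (isClosed_singleton.preimage hφ)
      g.continuous hg0 hfib
    have : φ t = q := htS
    exact hZY t ht0 (this ▸ hq)
  -- Urysohn functions
  have hg' : ∀ n : ℕ, ∃ gg : C(K, ℝ), Set.EqOn gg 0 (V n)ᶜ ∧ gg (k (xs n)) = 1 ∧
      ∀ q, gg q ∈ Set.Icc (0:ℝ) 1 := by
    intro n
    obtain ⟨gg, h0, h1, hIcc⟩ := exists_continuous_zero_one_of_isClosed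
      (hVo n).isClosed_compl isClosed_singleton
      (Set.disjoint_singleton_right.mpr (by simpa using hyV n))
    exact ⟨gg, h0, by simpa using h1 (Set.mem_singleton _), hIcc⟩
  choose gn hgn0 hgn1 hgnI using hg'
  set f : ↥Y → ℝ := fun y => ∑' n : ℕ, (n : ℝ) * gn n (y : K) with hf
  have hterm0 : ∀ (y : K) (N : ℕ), y ∉ D N → ∀ n, N ≤ n → (n:ℝ) * gn n y = 0 := by
    intro y N hyN n hNn
    have hyV' : y ∈ (V n)ᶜ := fun hyVn => hyN (hDmono hNn (hVD n hyVn))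
    have := hgn0 n hyV'
    simp only [Pi.zero_apply] at this
    rw [this, mul_zero]
  have hesc : ∀ y : ↥Y, ∃ N : ℕ, (y : K) ∉ D N := fun y => hkey y y.2
  have hS : ∀ y : ↥Y, Summable (fun n : ℕ => (n:ℝ) * gn n (y : K)) := by
    intro y
    obtain ⟨N, hN⟩ := hesc y
    apply summable_of_ne_finset_zero (s := Finset.range N)
    intro n hn
    exact hterm0 y N hN n (by simpa [Finset.mem_range, not_lt] using hn)
  have hfc : Continuous f := by
    rw [continuous_iff_continuousAt]
    intro y₀
    obtain ⟨N, hN⟩ := hesc y₀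
    have hnb : (Subtype.val ⁻¹' (D N)ᶜ : Set ↥Y) ∈ 𝓝 y₀ :=
      (((hDcl N).isOpen_compl).preimage continuous_subtype_val).mem_nhds hN
    have heq : Set.EqOn f (fun y : ↥Y => ∑ n ∈ Finset.range N, (n:ℝ) * gn n (y : K))
        (Subtype.val ⁻¹' (D N)ᶜ) := by
      intro y hy
      exact tsum_eq_sum (fun n hn =>
        hterm0 y N hy n (by simpa [Finset.mem_range, not_lt] using hn))
    have hcs : Continuous fun y : ↥Y => ∑ n ∈ Finset.range N, (n:ℝ) * gn n (y : K) := by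
      apply continuous_finset_sum
      intro n _
      exact continuous_const.mul ((gn n).continuous.comp continuous_subtype_val)
    exact hcs.continuousAt.congr (Filter.eventuallyEq_of_mem hnb heq).symm
  obtain ⟨M, hM⟩ := hY3 ⟨f, hfc⟩
  obtain ⟨n, hn⟩ := exists_nat_gt M
  set y' : ↥Y := ⟨k (xs n), hY1 (Set.mem_range_self _)⟩ with hy'
  have h1 : (n:ℝ) * gn n (k (xs n)) ≤ f y' := by
    apply (hS y').le_tsum n
    intro m _
    exact mul_nonneg (Nat.cast_nonneg m) (hgnI m _).1
  rw [hgn1 n, mul_one] at h1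
  have h2 : |f y'| ≤ M := hM y'
  have h3 : (n:ℝ) ≤ M := le_trans h1 ((le_abs_self _).trans h2)
  linarith

end Aux

/-- Let `X` be a locally pseudocompact Tychonoff space, `K` a compactification of `X` (via the
dense embedding `k`), and `φ : βX → K` the continuous extension of the identity of `X`. Then
`φ[ζX]` is the smallest (w.r.t. `⊆`) pseudocompactification of `X` with compact remainder
contained in `K`: it contains `X` as a dense subspace, is pseudocompact with compact remainder,
and is contained in any pseudocompactification of `X` with compact remainder inside `K`. -/
theorem image_zetaSet_smallest (X K : Type*) [TopologicalSpace X] [T2Space X]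
    [CompletelyRegularSpace X] [TopologicalSpace K] [CompactSpace K] [T2Space K]
    (hlp : ∀ x : X, ∃ U : Set X, IsOpen U ∧ x ∈ U ∧ IsPseudocompactSet (closure U))
    (k : X → K) (hk : IsEmbedding k) (hkd : DenseRange k)
    (φ : StoneCech X → K) (hφ : Continuous φ)
    (hφk : ∀ x : X, φ (stoneCechUnit x) = k x) :
    Set.range k ⊆ φ '' zetaSet X ∧
    φ '' zetaSet X ⊆ closure (Set.range k) ∧
    IsPseudocompactSet (φ '' zetaSet X) ∧
    IsCompact (φ '' zetaSet X \ Set.range k) ∧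
    ∀ Y : Set K, Set.range k ⊆ Y → Y ⊆ closure (Set.range k) →
      IsPseudocompactSet Y → IsCompact (Y \ Set.range k) → φ '' zetaSet X ⊆ Y := by
  have hXsub : Set.range (stoneCechUnit : X → StoneCech X) ⊆ zetaSet X := Set.subset_union_left
  have hcompl : (upsilonSet X)ᶜ ⊆ zetaSet X :=
    subset_trans subset_closure Set.subset_union_right
  -- Part 1
  have part1 : Set.range k ⊆ φ '' zetaSet X := by
    rintro _ ⟨x, rfl⟩
    exact ⟨stoneCechUnit x, hXsub (Set.mem_range_self x), hφk x⟩
  -- Part 2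
  have part2 : φ '' zetaSet X ⊆ closure (Set.range k) := by
    rw [hkd.closure_eq]
    exact Set.subset_univ _
  -- Part 4 ingredient : φ '' closure (υX)ᶜ misses range k
  have hCdisj : ∀ x : X, k x ∉ φ '' closure (upsilonSet X)ᶜ := by
    intro x hmem
    obtain ⟨W, hWo, hWx, hWsub⟩ := aux_nbhd hlp k hk φ hφ hφk x
    obtain ⟨p', hp', hφp'⟩ := hmem
    have hpW : p' ∈ φ ⁻¹' W := by rw [Set.mem_preimage, hφp']; exact hWx
    rw [mem_closure_iff] at hp'
    obtain ⟨r, hrW, hr⟩ := hp' (φ ⁻¹' W) (hWo.preimage hφ) hpW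
    exact hr (hWsub hrW)
  -- the image of the zeta set decomposes
  have himg : φ '' zetaSet X = Set.range k ∪ φ '' closure (upsilonSet X)ᶜ := by
    rw [zetaSet, Set.image_union]
    congr 1
    ext q
    constructor
    · rintro ⟨_, ⟨x, rfl⟩, rfl⟩
      exact ⟨x, (hφk x).symm⟩
    · rintro ⟨x, rfl⟩
      exact ⟨stoneCechUnit x, Set.mem_range_self x, hφk x⟩
  -- Part 4
  have part4 : IsCompact (φ '' zetaSet X \ Set.range k) := by
    have hC : IsCompact (φ '' closure (upsilonSet X)ᶜ) :=
      (isClosed_closure.isCompact).image hφ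
    have heq : φ '' zetaSet X \ Set.range k = φ '' closure (upsilonSet X)ᶜ := by
      rw [himg]
      ext q
      constructor
      · rintro ⟨hq, hnq⟩
        rcases hq with hq | hq
        · exact absurd hq hnq
        · exact hq
      · intro hq
        refine ⟨Or.inr hq, ?_⟩
        rintro ⟨x, rfl⟩
        exact hCdisj x hq
    rw [heq]
    exact hC
  -- Part 3 : pseudocompactness of φ '' ζX
  have part3 : IsPseudocompactSet (φ '' zetaSet X) := by
    intro f
    by_contra hunb
    push_neg at hunb
    -- transfer f to a function on ζX
    set amap : ↥(zetaSet X) → ↥(φ '' zetaSet X) :=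
      fun t => ⟨φ (t : StoneCech X), Set.mem_image_of_mem φ t.2⟩ with hamap
    have hamapc : Continuous amap :=
      Continuous.subtype_mk (hφ.comp continuous_subtype_val) _
    set h : ↥(zetaSet X) → ℝ := fun t => f (amap t) with hhdef
    have hhc : Continuous h := f.continuous.comp hamapc
    set e : X → ↥(zetaSet X) :=
      fun x => ⟨stoneCechUnit x, hXsub (Set.mem_range_self x)⟩ with he
    have hec : Continuous e := Continuous.subtype_mk continuous_stoneCechUnit _
    -- the function to extend
    set sX : X → ↥(Set.Icc (0:ℝ) 1) := fun x =>
      ⟨1 / (1 + |h (e x)|), by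
        constructor
        · positivity
        · rw [div_le_one (by positivity)]
          have := abs_nonneg (h (e x))
          linarith⟩ with hsX
    have hsXc : Continuous sX := by
      apply Continuous.subtype_mk
      have : Continuous fun x => h (e x) := hhc.comp hec
      have h1 : Continuous fun x => 1 + |h (e x)| := continuous_const.add this.abs
      exact continuous_const.div h1 (fun x => by positivity)
    set gbar : StoneCech X → ↥(Set.Icc (0:ℝ) 1) := stoneCechExtend hsXc with hgbar
    have hgbarc : Continuous gbar := continuous_stoneCechExtend hsXc
    -- agreement on ζX
    set G1 : ↥(zetaSet X) → ℝ := fun t => ((gbar (t : StoneCech X)) : ℝ) with hG1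
    set G2 : ↥(zetaSet X) → ℝ := fun t => 1 / (1 + |h t|) with hG2
    have hG1c : Continuous G1 :=
      continuous_subtype_val.comp (hgbarc.comp continuous_subtype_val)
    have hG2c : Continuous G2 := by
      have h1 : Continuous fun t : ↥(zetaSet X) => 1 + |h t| := continuous_const.add hhc.abs
      exact continuous_const.div h1 (fun t => by positivity)
    have hdense : Dense (Subtype.val ⁻¹' Set.range (stoneCechUnit : X → StoneCech X) :
        Set ↥(zetaSet X)) := by
      intro z
      rw [closure_subtype]
      have himeq : (Subtype.val : ↥(zetaSet X) → StoneCech X) ''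
          (Subtype.val ⁻¹' Set.range (stoneCechUnit : X → StoneCech X)) =
          Set.range (stoneCechUnit : X → StoneCech X) := by
        rw [Set.image_preimage_eq_inter_range, Subtype.range_coe]
        exact Set.inter_eq_left.mpr hXsub
      rw [himeq]
      exact denseRange_stoneCechUnit _
    have hEq : Set.EqOn G1 G2
        (Subtype.val ⁻¹' Set.range (stoneCechUnit : X → StoneCech X)) := by
      rintro ⟨t, ht⟩ ⟨x, hx⟩
      simp only at hx
      subst hx
      have hext : gbar (stoneCechUnit x) = sX x := congrFun (stoneCechExtend_extends hsXc) x
      show ((gbar (stoneCechUnit x) : ℝ)) = 1 / (1 + |h ⟨stoneCechUnit x, ht⟩|)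
      rw [hext]
    have hG12 : G1 = G2 := hG1c.ext_on hdense hG2c hEq
    -- find a zero of gbar
    have hzero : ∃ t : StoneCech X, ((gbar t : ℝ)) = 0 := by
      have hex : ∀ n : ℕ, ∃ t ∈ (Set.univ : Set (StoneCech X)),
          ((gbar t : ℝ)) ≤ ((n:ℝ) + 1)⁻¹ := by
        intro n
        obtain ⟨w, hw⟩ := hunb (n : ℝ)
        obtain ⟨t, htζ, htφ⟩ := w.2
        have hwe : amap ⟨t, htζ⟩ = w := Subtype.ext htφ
        have hG2v : G2 ⟨t, htζ⟩ = 1 / (1 + |f w|) := by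
          simp only [hG2, hhdef, hwe]
        have : G1 ⟨t, htζ⟩ ≤ ((n:ℝ) + 1)⁻¹ := by
          rw [hG12, hG2v]
          rw [div_le_iff₀ (by positivity : (0:ℝ) < 1 + |f w|), ← div_le_iff₀' (by positivity)]
          · rw [one_div, inv_inv]
            linarith [hw.le]
        exact ⟨t, Set.mem_univ t, this⟩
      obtain ⟨t, _, ht⟩ := aux_exists_zero isClosed_univ
        (continuous_subtype_val.comp hgbarc) (fun t => (gbar t).2.1) hex
      exact ⟨t, ht⟩
    obtain ⟨t0, ht0⟩ := hzero
    -- t0 is not in υX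
    have ht0u : t0 ∉ upsilonSet X := by
      intro hmem
      obtain ⟨z, hz1, x, hzx⟩ := hmem ((fun t => ((gbar t : ℝ))) ⁻¹' {0})
        ⟨⟨fun t => ((gbar t : ℝ)), continuous_subtype_val.comp hgbarc⟩, rfl⟩ (by simpa using ht0)
      have hz0 : ((gbar z : ℝ)) = 0 := by simpa using hz1
      rw [← hzx] at hz0
      have hext : gbar (stoneCechUnit x) = sX x := congrFun (stoneCechExtend_extends hsXc) x
      rw [hext] at hz0
      have hz0' : 1 / (1 + |h (e x)|) = 0 := hz0
      have hpos : (0:ℝ) < 1 / (1 + |h (e x)|) := by positivity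
      linarith
    have ht0ζ : t0 ∈ zetaSet X := hcompl ht0u
    have : G1 ⟨t0, ht0ζ⟩ = 0 := ht0
    rw [hG12] at this
    simp only [hG2] at this
    have hpos : (0:ℝ) < 1 / (1 + |h ⟨t0, ht0ζ⟩|) := by positivity
    linarith
  -- Part 5 : minimality
  have part5 : ∀ Y : Set K, Set.range k ⊆ Y → Y ⊆ closure (Set.range k) →
      IsPseudocompactSet Y → IsCompact (Y \ Set.range k) → φ '' zetaSet X ⊆ Y := by
    intro Y hY1 _ hY3 hY4
    have hRclosed : IsClosed (φ ⁻¹' (Y \ Set.range k)) := hY4.isClosed.preimage hφ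
    have hsub : (upsilonSet X)ᶜ ⊆ φ ⁻¹' (Y \ Set.range k) := by
      intro p hp
      rw [← hRclosed.closure_eq]
      rw [mem_closure_iff]
      intro Vo hVo hpV
      by_contra hemp
      rw [Set.not_nonempty_iff_eq_empty] at hemp
      simp only [upsilonSet, Set.mem_compl_iff, Set.mem_setOf_eq, not_forall] at hp
      obtain ⟨Z₀, hZ₀zero, hpZ₀, hne⟩ := hp
      rw [Set.not_nonempty_iff_eq_empty] at hne
      obtain ⟨g₀, rfl⟩ := hZ₀zero
      -- Urysohn on βX
      obtain ⟨hfun, hf0, hf1, hfI⟩ := exists_continuous_zero_one_of_isClosed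
        (isClosed_singleton (x := p)) hVo.isClosed_compl
        (Set.disjoint_singleton_left.mpr (by simpa using hpV))
      set G : C(StoneCech X, ℝ) := ⟨fun t => max |g₀ t| (hfun t),
        (g₀.continuous.abs.max hfun.continuous)⟩ with hG
      have hGnn : ∀ t, 0 ≤ G t := fun t => le_trans (abs_nonneg _) (le_max_left _ _)
      have hGsplit : ∀ t, G t = 0 → g₀ t = 0 ∧ hfun t = 0 := by
        intro t ht
        have h1 : |g₀ t| ≤ 0 := le_trans (le_max_left _ _) (le_of_eq ht)
        have h2 : hfun t ≤ 0 := le_trans (le_max_right _ _) (le_of_eq ht)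
        exact ⟨abs_eq_zero.mp (le_antisymm h1 (abs_nonneg _)),
          le_antisymm h2 (hfI t).1⟩
      have hGp : G p = 0 := by
        have h1 : g₀ p = 0 := by simpa using hpZ₀
        have h2 : hfun p = 0 := by simpa using hf0 (Set.mem_singleton p)
        simp [hG, h1, h2]
      refine aux_core k hk hkd φ hφ hφk Y hY1 hY3 G hGnn ⟨p, hGp⟩ ?_
      intro t hGt htY
      obtain ⟨hg₀t, hft⟩ := hGsplit t hGt
      have htV : t ∈ Vo := by
        by_contra htV
        have := hf1 htV
        simp only [Pi.one_apply] at this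
        rw [hft] at this
        norm_num at this
      -- t is not in υX
      have htu : t ∉ upsilonSet X := by
        intro hmem
        obtain ⟨z, hz1, hz2⟩ := hmem (g₀ ⁻¹' {0}) ⟨g₀, rfl⟩ (by simpa using hg₀t)
        have : z ∈ (g₀ ⁻¹' {0} ∩ Set.range (stoneCechUnit : X → StoneCech X)) := ⟨hz1, hz2⟩
        rw [hne] at this
        exact this
      rcases (em (φ t ∈ Set.range k)) with hrk | hrk
      · -- φ t ∈ range k : contradiction with t ∉ υX via local pseudocompactness
        obtain ⟨x, hx⟩ := hrk
        obtain ⟨W, hWo, hWx, hWsub⟩ := aux_nbhd hlp k hk φ hφ hφk x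
        have : t ∈ φ ⁻¹' W := by rw [Set.mem_preimage, ← hx]; exact hWx
        exact htu (hWsub this)
      · -- φ t ∈ Y \ range k : contradiction with the emptiness of Vo ∩ φ⁻¹(Y \ range k)
        have : t ∈ Vo ∩ φ ⁻¹' (Y \ Set.range k) := ⟨htV, ⟨htY, hrk⟩⟩
        rw [hemp] at this
        exact this
    rintro _ ⟨t, ht, rfl⟩
    rcases ht with ⟨x, rfl⟩ | hcl
    · rw [hφk]
      exact hY1 (Set.mem_range_self x)
    · have : t ∈ φ ⁻¹' (Y \ Set.range k) :=
        closure_minimal hsub hRclosed hcl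
      exact this.1
  exact ⟨part1, part2, part3, part4, part5⟩
end

section
/- Let X be a locally pseudocompact Tychonoff space, let K be a compactification of X, let φ : βX → K be the continuous extension of the identity map of X, and let E be a compact subset of K \ X containing φ[ζX \ X]. Then the subspace Y = X ∪ E of K is a pseudocompactification of X with compact remainder. -/
open Set Topology

/-- Let `X` be a locally pseudocompact Tychonoff space, `K` a compactification of `X` (via the
dense embedding `k`), `φ : βX → K` the continuous extension of the identity of `X`, and `E` a
compact subset of `K \ X` containing `φ[ζX \ X]`. Then the subspace `Y = X ∪ E` of `K` is a
pseudocompactification of `X` with compact remainder. -/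
theorem union_compact_is_pseudocompactification (X K : Type*) [TopologicalSpace X] [T2Space X]
    [CompletelyRegularSpace X] [TopologicalSpace K] [CompactSpace K] [T2Space K]
    (hlp : ∀ x : X, ∃ U : Set X, IsOpen U ∧ x ∈ U ∧ IsPseudocompactSet (closure U))
    (k : X → K) (hk : IsEmbedding k) (hkd : DenseRange k)
    (φ : StoneCech X → K) (hφ : Continuous φ)
    (hφk : ∀ x : X, φ (stoneCechUnit x) = k x)
    (E : Set K) (hE : IsCompact E) (hEX : E ⊆ (Set.range k)ᶜ)
    (hEζ : φ '' (zetaSet X \ Set.range (stoneCechUnit : X → StoneCech X)) ⊆ E) :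
    Set.range k ∪ E ⊆ closure (Set.range k) ∧
    IsPseudocompactSet (Set.range k ∪ E) ∧
    IsCompact ((Set.range k ∪ E) \ Set.range k) := by
  refine ⟨?_, ?_, ?_⟩
  · rw [hkd.closure_range]; exact Set.subset_univ _
  · intro f
    by_contra hcon
    push_neg at hcon
    have hkY : ∀ x : X, k x ∈ Set.range k ∪ E := fun x => Or.inl ⟨x, rfl⟩
    set g : X → ℝ := fun x => f ⟨k x, hkY x⟩ with hgdef
    have hgc : Continuous g := f.continuous.comp (hk.continuous.subtype_mk hkY)
    -- `g` is unbounded: for each n there is x with n < |g x|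
    have hgub : ∀ n : ℕ, ∃ x : X, (n : ℝ) < |g x| := by
      intro n
      obtain ⟨a, ha⟩ := hcon n
      have hUopen : IsOpen {b : ↥(Set.range k ∪ E) | (n : ℝ) < |f b|} :=
        isOpen_lt continuous_const (continuous_abs.comp f.continuous)
      obtain ⟨O, hO, hOeq⟩ := isOpen_induced_iff.mp hUopen
      have haO : (a : K) ∈ O := by
        rw [← Set.mem_preimage, hOeq]; exact ha
      obtain ⟨x, hx⟩ := hkd.exists_mem_open hO ⟨a, haO⟩
      refine ⟨x, ?_⟩
      have : (⟨k x, hkY x⟩ : ↥(Set.range k ∪ E)) ∈ {b : ↥(Set.range k ∪ E) | (n : ℝ) < |f b|} := by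
        rw [← hOeq]; exact hx
      exact this
    obtain ⟨x0, -⟩ := hgub 0
    haveI : Nonempty X := ⟨x0⟩
    haveI : Nonempty (StoneCech X) := ⟨stoneCechUnit x0⟩
    -- `h x = 1/(1+|g x|)` valued in [0,1]
    have hden : ∀ x : X, (0:ℝ) < 1 + |g x| := fun x => by positivity
    set h : X → Set.Icc (0:ℝ) 1 := fun x =>
      ⟨1 / (1 + |g x|), by
        constructor
        · positivity
        · rw [div_le_one (hden x)]
          have := abs_nonneg (g x); linarith⟩ with hhdef
    have hhc : Continuous h := by
      refine Continuous.subtype_mk ?_ _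
      exact continuous_const.div (continuous_const.add hgc.abs) (fun x => (hden x).ne')
    haveI : CompactSpace (Set.Icc (0:ℝ) 1) := isCompact_iff_compactSpace.mp isCompact_Icc
    set H : StoneCech X → Set.Icc (0:ℝ) 1 := stoneCechExtend hhc with hHdef
    have hHc : Continuous H := continuous_stoneCechExtend hhc
    have hHu : ∀ x : X, H (stoneCechUnit x) = h x := fun x =>
      congrFun (stoneCechExtend_extends hhc) x
    set Hr : StoneCech X → ℝ := fun q => (H q : ℝ) with hHrdef
    have hHrc : Continuous Hr := continuous_subtype_val.comp hHc
    have hHru : ∀ x : X, Hr (stoneCechUnit x) = 1 / (1 + |g x|) := by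
      intro x
      show (H (stoneCechUnit x) : ℝ) = _
      rw [hHu x]
    -- minimum of Hr
    obtain ⟨p, -, hpmin⟩ := isCompact_univ.exists_isMinOn (Set.univ_nonempty)
      hHrc.continuousOn
    have hpmin' : ∀ q, Hr p ≤ Hr q := fun q => hpmin (Set.mem_univ q)
    have hHrpos : ∀ x : X, 0 < Hr (stoneCechUnit x) := by
      intro x; rw [hHru x]; exact div_pos one_pos (hden x)
    have hHrp0 : Hr p = 0 := by
      have h0 : 0 ≤ Hr p := (H p).2.1
      have hle : ∀ n : ℕ, Hr p ≤ 1 / (n + 1 : ℝ) := by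
        intro n
        obtain ⟨x, hx⟩ := hgub n
        refine le_trans (hpmin' (stoneCechUnit x)) ?_
        rw [hHru x]
        apply one_div_le_one_div_of_le (by positivity)
        linarith
      have := ge_of_tendsto tendsto_one_div_add_atTop_nhds_zero_nat
        (Filter.Eventually.of_forall hle)
      linarith
    -- p is not in the range of stoneCechUnit
    have hpnr : p ∉ Set.range (stoneCechUnit : X → StoneCech X) := by
      rintro ⟨x, rfl⟩
      exact absurd hHrp0 (ne_of_gt (hHrpos x))
    -- p ∈ zetaSet
    have hpz : p ∈ zetaSet X := by
      refine Or.inr (subset_closure ?_)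
      intro hp
      obtain ⟨q, hq0, x, rfl⟩ := hp (Hr ⁻¹' {0}) ⟨⟨Hr, hHrc⟩, rfl⟩ hHrp0
      exact absurd hq0 (ne_of_gt (hHrpos x))
    have hyE : φ p ∈ E := hEζ ⟨p, ⟨hpz, hpnr⟩, rfl⟩
    set a : ↥(Set.range k ∪ E) := ⟨φ p, Or.inr hyE⟩ with hadef
    -- for every n, n ≤ |f a|
    have key : ∀ n : ℕ, (n : ℝ) ≤ |f a| := by
      intro n
      set S : Set X := {x | (n : ℝ) ≤ |g x|} with hSdef
      -- p ∈ closure (stoneCechUnit '' S)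
      have hpcl : p ∈ closure (stoneCechUnit '' S) := by
        rw [mem_closure_iff]
        intro U hU hpU
        have hV : IsOpen (U ∩ Hr ⁻¹' (Set.Iio (1 / (n + 1 : ℝ)))) :=
          hU.inter (isOpen_Iio.preimage hHrc)
        have hpV : p ∈ U ∩ Hr ⁻¹' (Set.Iio (1 / (n + 1 : ℝ))) :=
          ⟨hpU, by simp [Set.mem_preimage, hHrp0]; positivity⟩
        obtain ⟨x, hx⟩ := denseRange_stoneCechUnit.exists_mem_open hV ⟨p, hpV⟩
        refine ⟨stoneCechUnit x, hx.1, x, ?_, rfl⟩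
        have hlt : Hr (stoneCechUnit x) < 1 / (n + 1 : ℝ) := hx.2
        rw [hHru x] at hlt
        have : (n + 1 : ℝ) < 1 + |g x| :=
          lt_of_one_div_lt_one_div (by positivity) hlt
        simp only [hSdef, Set.mem_setOf_eq]; linarith
      -- hence φ p ∈ closure (k '' S)
      have hycl : φ p ∈ closure (k '' S) := by
        have h1 : φ p ∈ closure (φ '' (stoneCechUnit '' S)) :=
          (image_closure_subset_closure_image hφ) ⟨p, hpcl, rfl⟩
        rwa [← Set.image_comp, show φ ∘ stoneCechUnit = k from funext hφk] at h1
      -- transfer to the subtype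
      have hacl : a ∈ closure ((Subtype.val : (Set.range k ∪ E : Set K) → K) ⁻¹' (k '' S)) := by
        rw [closure_subtype]
        have : (Subtype.val : (Set.range k ∪ E : Set K) → K) '' ((Subtype.val : (Set.range k ∪ E : Set K) → K) ⁻¹' (k '' S)) = k '' S := by
          apply Set.image_preimage_eq_of_subset
          rintro _ ⟨x, -, rfl⟩
          exact ⟨⟨k x, hkY x⟩, rfl⟩
        rw [this]
        exact hycl
      have hclosed : IsClosed {b : ↥(Set.range k ∪ E) | (n : ℝ) ≤ |f b|} :=
        isClosed_le continuous_const (continuous_abs.comp f.continuous)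
      have hsub : (Subtype.val : (Set.range k ∪ E : Set K) → K) ⁻¹' (k '' S) ⊆ {b : ↥(Set.range k ∪ E) | (n : ℝ) ≤ |f b|} := by
        rintro b hb
        obtain ⟨x, hxS, hxb⟩ := hb
        have : b = ⟨k x, hkY x⟩ := Subtype.ext hxb.symm
        rw [this]
        exact hxS
      exact (hclosed.closure_subset_iff.mpr hsub) hacl
    obtain ⟨n, hn⟩ := exists_nat_gt (|f a|)
    exact absurd (key n) (not_le.mpr hn)
  · have heq : (Set.range k ∪ E) \ Set.range k = E := by
      ext y
      constructor
      · rintro ⟨hy | hy, hny⟩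
        · exact absurd hy hny
        · exact hy
      · intro hy
        exact ⟨Or.inr hy, hEX hy⟩
    rw [heq]; exact hE
end

section
/- Let X be a locally pseudocompact Tychonoff space. Every pseudocompactification Y of X with compact remainder is of the form Y = X ∪ E, where K is a compactification of Y (hence of X), φ : βX → K is the continuous extension of the identity map of X, and E is a compact subset of K \ X containing φ[ζX \ X]; in particular, for any compactification K of Y with extension map φ : βX → K, one has φ[ζX \ X] ⊆ Y \ X. -/
open Set Topology

/-- If `cl_X U` is pseudocompact, then the closure of `U` in `βX` lies in `υX`. -/
lemma closure_unit_image_subset_upsilon {X : Type*} [TopologicalSpace X]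
    {U : Set X} (hU : IsPseudocompactSet (closure U)) :
    closure (stoneCechUnit '' U) ⊆ upsilonSet X := by
  rcases U.eq_empty_or_nonempty with rfl | ⟨x0, hx0⟩
  · simp
  intro p hp Z hZ hpZ
  obtain ⟨f, rfl⟩ := hZ
  by_contra hne
  rw [Set.not_nonempty_iff_eq_empty] at hne
  have hfx : ∀ x : X, f (stoneCechUnit x) ≠ 0 := by
    intro x h0
    have : stoneCechUnit x ∈ (⇑f ⁻¹' {0}) ∩ Set.range (stoneCechUnit : X → StoneCech X) :=
      ⟨h0, x, rfl⟩
    rw [hne] at this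
    exact this
  have hcont : Continuous fun z : closure U => (|f (stoneCechUnit z.1)|)⁻¹ := by
    apply Continuous.inv₀
    · exact ((map_continuous f).comp (continuous_stoneCechUnit.comp continuous_subtype_val)).abs
    · exact fun z => abs_ne_zero.mpr (hfx z.1)
  obtain ⟨M, hM⟩ := hU ⟨_, hcont⟩
  have hMpos : 0 < M := by
    have h1 := hM ⟨x0, subset_closure hx0⟩
    simp only [ContinuousMap.coe_mk] at h1
    have h2 : 0 < |f (stoneCechUnit x0)| := abs_pos.mpr (hfx x0)
    have h3 : 0 < (|f (stoneCechUnit x0)|)⁻¹ := by positivity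
    calc 0 < (|f (stoneCechUnit x0)|)⁻¹ := h3
      _ ≤ |(|f (stoneCechUnit x0)|)⁻¹| := le_abs_self _
      _ ≤ M := h1
  have hsub : stoneCechUnit '' U ⊆ {r : StoneCech X | M⁻¹ ≤ |f r|} := by
    rintro _ ⟨x, hx, rfl⟩
    have h1 := hM ⟨x, subset_closure hx⟩
    simp only [ContinuousMap.coe_mk] at h1
    have h2 : 0 < |f (stoneCechUnit x)| := abs_pos.mpr (hfx x)
    have h3 : (|f (stoneCechUnit x)|)⁻¹ ≤ M := le_trans (le_abs_self _) h1
    have := (inv_le_comm₀ h2 hMpos).mp h3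
    simpa using this
  have hcl : IsClosed {r : StoneCech X | M⁻¹ ≤ |f r|} :=
    isClosed_Ici.preimage (map_continuous f).abs
  have := closure_minimal hsub hcl hp
  have hfp : f p = 0 := hpZ
  rw [mem_setOf_eq, hfp, abs_zero] at this
  exact absurd this (not_le.mpr (by positivity))

/-- Local pseudocompactness: a point of `βX` mapping into the copy of `X` inside `K`
has a neighborhood contained in `υX`. -/
lemma exists_open_nhd_subset_upsilon {X K : Type*} [TopologicalSpace X] [TopologicalSpace K]
    (hlp : ∀ x : X, ∃ U : Set X, IsOpen U ∧ x ∈ U ∧ IsPseudocompactSet (closure U))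
    (g : X → K) (hg : IsInducing g)
    (φ : StoneCech X → K) (hφ : Continuous φ) (hφe : ∀ x, φ (stoneCechUnit x) = g x)
    {p : StoneCech X} {x : X} (hpx : φ p = g x) :
    ∃ W : Set (StoneCech X), IsOpen W ∧ p ∈ W ∧ W ⊆ upsilonSet X := by
  obtain ⟨U, hUo, hxU, hUps⟩ := hlp x
  obtain ⟨V, hVo, hVU⟩ := hg.isOpen_iff.mp hUo
  refine ⟨φ ⁻¹' V, hVo.preimage hφ, ?_, ?_⟩
  · show φ p ∈ V
    rw [hpx]
    rw [← hVU] at hxU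
    exact hxU
  · intro r hr
    refine closure_unit_image_subset_upsilon hUps ?_
    rw [mem_closure_iff]
    intro O hOo hrO
    have hne : (O ∩ φ ⁻¹' V).Nonempty := ⟨r, hrO, hr⟩
    obtain ⟨z, ⟨hzO, hzV⟩, x', rfl⟩ :=
      denseRange_stoneCechUnit.inter_open_nonempty _ (hOo.inter (hVo.preimage hφ)) hne
    have hx' : x' ∈ U := by
      rw [← hVU]
      show g x' ∈ V
      rw [← hφe x']
      exact hzV
    exact ⟨stoneCechUnit x', hzO, x', hx', rfl⟩

/-- Pseudocompactness of `Y`: points of `βX` outside `υX` map into the copy of `Y` in `K`. -/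
lemma phi_mem_range_of_not_upsilon {X Y K : Type*} [TopologicalSpace X]
    [TopologicalSpace Y] [T2Space Y] [TopologicalSpace K] [CompactSpace K] [T2Space K]
    (e : X → Y) (he : IsEmbedding e)
    (hps : IsPseudocompact Y) (hrem : IsCompact (Set.range e)ᶜ)
    (j : Y → K) (hj : IsEmbedding j)
    (φ : StoneCech X → K) (hφ : Continuous φ)
    (hφe : ∀ x : X, φ (stoneCechUnit x) = j (e x))
    {p : StoneCech X} (hp : p ∉ upsilonSet X) :
    φ p ∈ Set.range j := by
  by_contra hq
  -- extract a zero-set witness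
  simp only [upsilonSet, mem_setOf_eq, not_forall] at hp
  obtain ⟨Z, hZ, hpZ, hne⟩ := hp
  obtain ⟨f, rfl⟩ := hZ
  rw [Set.not_nonempty_iff_eq_empty] at hne
  have hfp : f p = 0 := hpZ
  have hfx : ∀ x : X, f (stoneCechUnit x) ≠ 0 := by
    intro x h0
    have : stoneCechUnit x ∈ (⇑f ⁻¹' {0}) ∩ Set.range (stoneCechUnit : X → StoneCech X) :=
      ⟨h0, x, rfl⟩
    rw [hne] at this
    exact this
  -- Urysohn function separating φ p from the image of the remainder
  have hrem'c : IsCompact (j '' (Set.range e)ᶜ) := hrem.image hj.continuous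
  have hdisj : Disjoint {φ p} (j '' (Set.range e)ᶜ) := by
    rw [Set.disjoint_singleton_left]
    rintro ⟨y, -, hy⟩
    exact hq ⟨y, hy⟩
  obtain ⟨h, h0, h1, h01⟩ :=
    exists_continuous_zero_one_of_isClosed isClosed_singleton hrem'c.isClosed hdisj
  set G : StoneCech X → ℝ := fun r => |f r| + h (φ r) with hGdef
  have hGc : Continuous G := (map_continuous f).abs.add ((map_continuous h).comp hφ)
  have hGp : G p = 0 := by
    simp only [hGdef, hfp, abs_zero, zero_add]
    exact h0 rfl
  have hGpos : ∀ x : X, 0 < G (stoneCechUnit x) := by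
    intro x
    have := (h01 (φ (stoneCechUnit x))).1
    have := abs_pos.mpr (hfx x)
    simp only [hGdef]
    linarith
  have hhle : ∀ x : X, h (j (e x)) ≤ G (stoneCechUnit x) := by
    intro x
    simp only [hGdef, ← hφe x]
    have : 0 ≤ |f (stoneCechUnit x)| := abs_nonneg _
    linarith
  set u : X → ℝ := fun x => (1 - h (j (e x))) * (G (stoneCechUnit x))⁻¹ with hudef
  have hu : Continuous u := by
    apply Continuous.mul
    · exact continuous_const.sub ((map_continuous h).comp (hj.continuous.comp he.continuous))
    · exact (hGc.comp continuous_stoneCechUnit).inv₀ fun x => (hGpos x).ne'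
  set ψ : Y → ℝ := Function.extend e u (fun _ => (0:ℝ)) with hψdef
  have hψe : ∀ x : X, ψ (e x) = u x := fun x => he.injective.extend_apply u (fun _ => (0:ℝ)) x
  have hψ0 : ∀ y ∉ Set.range e, ψ y = 0 := by
    intro y hy
    exact Function.extend_apply' u (fun _ => (0:ℝ)) y (by simpa [Set.range] using hy)
  have hro : IsOpen (Set.range e) := isClosed_compl_iff.mp hrem.isClosed
  have hoe : IsOpenEmbedding e := ⟨he, hro⟩
  have hψc : Continuous ψ := by
    rw [continuous_iff_continuousAt]
    intro y
    by_cases hy : y ∈ Set.range e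
    · obtain ⟨x, rfl⟩ := hy
      rw [← hoe.continuousAt_iff]
      have : ψ ∘ e = u := funext hψe
      rw [this]
      exact hu.continuousAt
    · have hjy1 : h (j y) = 1 := h1 ⟨y, hy, rfl⟩
      have hhc : Continuous fun y' => h (j y') := (map_continuous h).comp hj.continuous
      have hS : ∀ᶠ y' in 𝓝 y, (1:ℝ)/2 < h (j y') := by
        have hSo : IsOpen {y' | (1:ℝ)/2 < h (j y')} := isOpen_lt continuous_const hhc
        exact Filter.eventually_of_mem (hSo.mem_nhds (by simp [hjy1]; norm_num)) fun _ hy' => hy'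
      have hbound : ∀ᶠ y' in 𝓝 y, ‖ψ y'‖ ≤ 2 * (1 - h (j y')) := by
        filter_upwards [hS] with y' hy'
        by_cases hy'e : y' ∈ Set.range e
        · obtain ⟨x, rfl⟩ := hy'e
          rw [hψe x]
          have hG := hGpos x
          have hhG := hhle x
          have hh1 : h (j (e x)) ≤ 1 := (h01 _).2
          have hGhalf : (1:ℝ)/2 ≤ G (stoneCechUnit x) := le_trans (le_of_lt hy') hhG
          have hinv : (G (stoneCechUnit x))⁻¹ ≤ 2 := by
            have := inv_anti₀ (by norm_num : (0:ℝ) < 1/2) hGhalf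
            norm_num at this
            linarith
          have hinvnn : (0:ℝ) ≤ (G (stoneCechUnit x))⁻¹ := by positivity
          have ha : (0:ℝ) ≤ 1 - h (j (e x)) := by linarith
          rw [Real.norm_eq_abs, hudef, abs_of_nonneg (mul_nonneg ha hinvnn)]
          nlinarith
        · rw [hψ0 y' hy'e]
          have hh1 : h (j y') ≤ 1 := (h01 _).2
          simp only [norm_zero]
          linarith
      have htend : Filter.Tendsto (fun y' => 2 * (1 - h (j y'))) (𝓝 y) (𝓝 0) := by
        have hc : ContinuousAt (fun y' => 2 * (1 - h (j y'))) y :=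
          (continuous_const.mul (continuous_const.sub hhc)).continuousAt
        have hval : (2:ℝ) * (1 - h (j y)) = 0 := by rw [hjy1]; ring
        rw [← hval]
        exact hc
      have htendψ := squeeze_zero_norm' hbound htend
      have hψy : ψ y = 0 := hψ0 y hy
      rw [ContinuousAt, hψy]
      exact htendψ
  obtain ⟨M, hM⟩ := hps ⟨ψ, hψc⟩
  set M' : ℝ := |M| + 1 with hM'def
  have hM'pos : 0 < M' := by positivity
  have hNopen : IsOpen ({r | G r < (2*M')⁻¹} ∩ {r | h (φ r) < 1/2}) :=
    (isOpen_lt hGc continuous_const).inter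
      (isOpen_lt ((map_continuous h).comp hφ) continuous_const)
  have hpN : p ∈ {r | G r < (2*M')⁻¹} ∩ {r | h (φ r) < 1/2} := by
    constructor
    · simp only [mem_setOf_eq, hGp]; positivity
    · simp only [mem_setOf_eq, h0 rfl]; norm_num
  obtain ⟨x, hxN⟩ := denseRange_stoneCechUnit.exists_mem_open hNopen ⟨p, hpN⟩
  obtain ⟨hx1, hx2⟩ := hxN
  rw [mem_setOf_eq, hφe x] at hx2
  have hG := hGpos x
  have hbinv : 2 * M' < (G (stoneCechUnit x))⁻¹ := by
    have h2 : (0:ℝ) < (2*M')⁻¹ := by positivity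
    have := inv_strictAnti₀ hG hx1
    rwa [inv_inv] at this
  have hux : M' < u x := by
    have ha : (1:ℝ)/2 < 1 - h (j (e x)) := by linarith
    have hb : (0:ℝ) < (G (stoneCechUnit x))⁻¹ := by positivity
    simp only [hudef]
    nlinarith
  have := hM (e x)
  simp only [ContinuousMap.coe_mk] at this
  rw [hψe x] at this
  have : u x ≤ M := le_trans (le_abs_self _) this
  have : M ≤ |M| := le_abs_self M
  linarith

/-- Let `X` be a locally pseudocompact Tychonoff space and `Y` a pseudocompactification of `X`
(via the dense embedding `e`) with compact remainder. Then for any compactification `K` of `Y`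
(via the dense embedding `j`) with extension map `φ : βX → K` of the identity of `X`, `Y` is of
the form `X ∪ E` where `E` is a compact subset of `K \ X` containing `φ[ζX \ X]`; in
particular `φ[ζX \ X] ⊆ Y \ X`. -/
theorem pseudocompactification_form (X Y K : Type*) [TopologicalSpace X] [T2Space X]
    [CompletelyRegularSpace X] [TopologicalSpace Y] [T2Space Y] [CompletelyRegularSpace Y]
    [TopologicalSpace K] [CompactSpace K] [T2Space K]
    (hlp : ∀ x : X, ∃ U : Set X, IsOpen U ∧ x ∈ U ∧ IsPseudocompactSet (closure U))
    (e : X → Y) (he : IsEmbedding e) (hd : DenseRange e)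
    (hps : IsPseudocompact Y) (hrem : IsCompact (Set.range e)ᶜ)
    (j : Y → K) (hj : IsEmbedding j) (hjd : DenseRange j)
    (φ : StoneCech X → K) (hφ : Continuous φ)
    (hφe : ∀ x : X, φ (stoneCechUnit x) = j (e x)) :
    (∃ E : Set K, IsCompact E ∧ E ⊆ (Set.range (j ∘ e))ᶜ ∧
        φ '' (zetaSet X \ Set.range (stoneCechUnit : X → StoneCech X)) ⊆ E ∧
        Set.range j = Set.range (j ∘ e) ∪ E) ∧
    φ '' (zetaSet X \ Set.range (stoneCechUnit : X → StoneCech X)) ⊆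
      Set.range j \ Set.range (j ∘ e) := by
  have hje : IsEmbedding (j ∘ e) := hj.comp he
  set E : Set K := j '' (Set.range e)ᶜ with hEdef
  have hEc : IsCompact E := hrem.image hj.continuous
  have hEsub : E ⊆ (Set.range (j ∘ e))ᶜ := by
    rintro _ ⟨y, hy, rfl⟩ ⟨x, hx⟩
    exact hy ⟨x, hj.injective hx⟩
  have hcore : φ '' (upsilonSet X)ᶜ ⊆ E := by
    rintro _ ⟨p, hp, rfl⟩
    obtain ⟨y, hy⟩ := phi_mem_range_of_not_upsilon e he hps hrem j hj φ hφ hφe hp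
    refine ⟨y, ?_, hy⟩
    intro hyx
    obtain ⟨x, rfl⟩ := hyx
    obtain ⟨W, hWo, hpW, hWυ⟩ :=
      exists_open_nhd_subset_upsilon hlp (j ∘ e) hje.toIsInducing φ hφ hφe
        (x := x) hy.symm
    exact hp (hWυ hpW)
  have hmain : φ '' (zetaSet X \ Set.range (stoneCechUnit : X → StoneCech X)) ⊆ E := by
    rintro _ ⟨p, ⟨hpz, hpn⟩, rfl⟩
    have hpz' : p ∈ Set.range (stoneCechUnit : X → StoneCech X) ∪
        closure (upsilonSet X)ᶜ := hpz
    have hpcl : p ∈ closure (upsilonSet X)ᶜ := hpz'.resolve_left hpn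
    have : φ p ∈ closure (φ '' (upsilonSet X)ᶜ) :=
      image_closure_subset_closure_image hφ ⟨p, hpcl, rfl⟩
    exact closure_minimal hcore hEc.isClosed this
  have hrange : Set.range j = Set.range (j ∘ e) ∪ E := by
    rw [Set.range_comp, hEdef, ← Set.image_union, Set.union_compl_self, Set.image_univ]
  refine ⟨⟨E, hEc, hEsub, hmain, hrange⟩, ?_⟩
  intro k hk
  have hkE := hmain hk
  obtain ⟨y, -, hy⟩ := id hkE
  exact ⟨⟨y, hy⟩, hEsub hkE⟩
end

section
/- Let X be a locally pseudocompact Tychonoff space. Then ζX is the largest, with respect to the partial order ≤, among all pseudocompactifications of X with compact remainder; that is, ζX is itself a pseudocompactification of X with compact remainder, and for every pseudocompactification Y of X with compact remainder there exists a continuous map from ζX onto a subspace of Y fixing X pointwise, so Y ≤ ζX. -/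
open Set Topology

open Filter
section Aux

variable {X : Type*} [TopologicalSpace X] [T2Space X] [CompletelyRegularSpace X]

lemma my_isEmbedding_unit : IsEmbedding (stoneCechUnit : X → StoneCech X) := by
  have h35 : T35Space X := ⟨⟩
  refine ⟨isInducing_iff_nhds.2 fun x => le_antisymm
    (tendsto_iff_comap.1 continuous_stoneCechUnit.continuousAt) ?_,
    injective_stoneCechUnit_of_t35Space⟩
  intro s hs
  obtain ⟨U, hUs, hUo, hxU⟩ := mem_nhds_iff.1 hs
  obtain ⟨f, hfc, hfx, hfK⟩ :=
    CompletelyRegularSpace.completely_regular x Uᶜ hUo.isClosed_compl (by simpa using hxU)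
  set F := stoneCechExtend hfc with hF
  have hFu : ∀ a : X, F (stoneCechUnit a) = f a := fun a => congrFun (stoneCechExtend_extends hfc) a
  refine mem_comap.2 ⟨F ⁻¹' {y : unitInterval | (y : ℝ) < 1}, ?_, ?_⟩
  · refine IsOpen.mem_nhds ?_ ?_
    · exact (isOpen_Iio.preimage (continuous_subtype_val.comp (continuous_stoneCechExtend hfc)))
    · show ((F (stoneCechUnit x) : ℝ)) < 1
      rw [hFu, hfx]; norm_num
  · intro a ha
    have ha' : ((f a : ℝ)) < 1 := by
      have : ((F (stoneCechUnit a) : ℝ)) < 1 := ha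
      rwa [hFu] at this
    by_contra haU
    have : f a = 1 := hfK (by simpa using fun h => haU (hUs h))
    rw [this] at ha'
    norm_num at ha'

lemma my_closure_pc_subset_upsilon {U : Set X} (hpc : IsPseudocompactSet (closure U)) :
    closure (stoneCechUnit '' U) ⊆ upsilonSet X := by
  intro p hp Z hZ hpZ
  obtain ⟨g, rfl⟩ := hZ
  by_contra hne
  rw [Set.not_nonempty_iff_eq_empty] at hne
  have hgx : ∀ a : X, g (stoneCechUnit a) ≠ 0 := by
    intro a h0
    have : stoneCechUnit a ∈ (g ⁻¹' {0} : Set (StoneCech X)) ∩ Set.range stoneCechUnit :=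
      ⟨by simpa using h0, mem_range_self a⟩
    simp [hne] at this
  set φ : C(↥(closure U), ℝ) :=
    ⟨fun a => 1 / |g (stoneCechUnit (a : X))|, by
      refine continuous_const.div ?_ ?_
      · exact (map_continuous g).abs.comp (continuous_stoneCechUnit.comp continuous_subtype_val)
      · exact fun a => abs_ne_zero.2 (hgx a)⟩ with hφ
  obtain ⟨M, hM⟩ := hpc φ
  obtain ⟨x0, hx0⟩ : U.Nonempty := by
    rcases (closure_nonempty_iff.1 ⟨p, hp⟩) with ⟨_, x0, hx0, rfl⟩
    exact ⟨x0, hx0⟩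
  have hφpos : ∀ a : ↥(closure U), 0 < φ a := fun a =>
    div_pos one_pos (abs_pos.2 (hgx a))
  have hMpos : 0 < M := lt_of_lt_of_le (hφpos ⟨x0, subset_closure hx0⟩)
    (le_trans (le_abs_self _) (hM _))
  have hbound : ∀ x ∈ U, 1 / M ≤ |g (stoneCechUnit x)| := by
    intro x hx
    have h1 : φ ⟨x, subset_closure hx⟩ ≤ M := le_trans (le_abs_self _) (hM _)
    exact (one_div_le (abs_pos.2 (hgx x)) hMpos).1 h1
  have hclosed : IsClosed {t : StoneCech X | 1 / M ≤ |g t|} :=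
    isClosed_le continuous_const (map_continuous g).abs
  have hsub : closure (stoneCechUnit '' U) ⊆ {t : StoneCech X | 1 / M ≤ |g t|} := by
    apply closure_minimal _ hclosed
    rintro _ ⟨x, hx, rfl⟩
    exact hbound x hx
  have := hsub hp
  have hgp : g p = 0 := by simpa using hpZ
  simp only [mem_setOf_eq, hgp, abs_zero] at this
  exact absurd this (not_le.2 (by positivity))

lemma my_unit_notin_closure_compl
    (hlp : ∀ x : X, ∃ U : Set X, IsOpen U ∧ x ∈ U ∧ IsPseudocompactSet (closure U)) (x : X) :
    stoneCechUnit x ∉ closure (upsilonSet X)ᶜ := by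
  obtain ⟨U, hUo, hxU, hpc⟩ := hlp x
  obtain ⟨W, hWo, hWU⟩ := (my_isEmbedding_unit.toIsInducing.isOpen_iff).1 hUo
  have hWsub : W ⊆ closure (stoneCechUnit '' U) := by
    have h1 : W ⊆ closure (W ∩ Set.range (stoneCechUnit : X → StoneCech X)) :=
      denseRange_stoneCechUnit.open_subset_closure_inter hWo
    have h2 : W ∩ Set.range (stoneCechUnit : X → StoneCech X) = stoneCechUnit '' U := by
      rw [← hWU, Set.image_preimage_eq_inter_range, Set.inter_comm]
    rwa [h2] at h1
  have hWups : W ⊆ upsilonSet X := fun t ht => my_closure_pc_subset_upsilon hpc (hWsub ht)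
  intro hcl
  have hxW : stoneCechUnit x ∈ W := by rw [← Set.mem_preimage, hWU]; exact hxU
  obtain ⟨t, htW, hti⟩ := mem_closure_iff.1 hcl W hWo hxW
  exact hti (hWups htW)

lemma my_bound_on_X (f : C(↥(zetaSet X), ℝ)) :
    ∃ M : ℝ, ∀ x : X,
      |f ⟨stoneCechUnit x, Set.mem_union_left _ (Set.mem_range_self x)⟩| ≤ M := by
  cases isEmpty_or_nonempty X with
  | inl hX => exact ⟨0, fun x => (IsEmpty.false x).elim⟩
  | inr hX =>
  set h : X → ℝ := fun x => f ⟨stoneCechUnit x, Set.mem_union_left _ (Set.mem_range_self x)⟩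
    with hh
  have hhc : Continuous h := (map_continuous f).comp (continuous_stoneCechUnit.subtype_mk _)
  have hmemI : ∀ x : X, 1 / (1 + |h x|) ∈ unitInterval := by
    intro x
    constructor
    · positivity
    · rw [div_le_one (by positivity)]; linarith [abs_nonneg (h x)]
  set h' : X → unitInterval := fun x => ⟨1 / (1 + |h x|), hmemI x⟩ with hh'
  have hh'c : Continuous h' := Continuous.subtype_mk
    (continuous_const.div (by fun_prop) (fun x => by positivity)) _
  set H := stoneCechExtend hh'c with hH
  have hHc : Continuous fun t => ((H t : ℝ)) :=
    continuous_subtype_val.comp (continuous_stoneCechExtend hh'c)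
  have hHu : ∀ x : X, ((H (stoneCechUnit x) : ℝ)) = 1 / (1 + |h x|) := by
    intro x
    rw [show H (stoneCechUnit x) = h' x from congrFun (stoneCechExtend_extends hh'c) x]
  by_cases hz : ∀ t : StoneCech X, ((H t : ℝ)) ≠ 0
  · have hne : Nonempty (StoneCech X) := ⟨stoneCechUnit (Classical.arbitrary X)⟩
    obtain ⟨t₀, -, ht₀⟩ := isCompact_univ.exists_isMinOn univ_nonempty hHc.continuousOn
    have hδpos : 0 < ((H t₀ : ℝ)) := lt_of_le_of_ne (H t₀).2.1 (Ne.symm (hz t₀))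
    refine ⟨1 / ((H t₀ : ℝ)), fun x => ?_⟩
    have h1 : ((H t₀ : ℝ)) ≤ 1 / (1 + |h x|) := by
      rw [← hHu x]; exact isMinOn_iff.1 ht₀ _ (mem_univ _)
    have h2 : 1 + |h x| ≤ 1 / ((H t₀ : ℝ)) := by
      rw [le_div_iff₀ hδpos]
      rw [le_div_iff₀ (by positivity)] at h1
      linarith
    have := abs_nonneg (h x)
    calc |h x| ≤ 1 + |h x| := by linarith
    _ ≤ 1 / ((H t₀ : ℝ)) := h2
  · push_neg at hz
    obtain ⟨p, hp⟩ := hz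
    exfalso
    have hpu : p ∉ upsilonSet X := by
      intro hups
      obtain ⟨t, ht0, x, rfl⟩ := hups ((fun t => ((H t : ℝ))) ⁻¹' {0})
        ⟨⟨_, hHc⟩, rfl⟩ (by simpa using hp)
      have h0 : ((H (stoneCechUnit x) : ℝ)) = 0 := ht0
      rw [hHu] at h0
      have hpos : (0:ℝ) < 1 / (1 + |h x|) := by positivity
      linarith
    have hpz : p ∈ zetaSet X := Set.mem_union_right _ (subset_closure hpu)
    set p₁ : ↥(zetaSet X) := ⟨p, hpz⟩ with hp₁
    set ε : ℝ := 1 / (|f p₁| + 3) with hε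
    have hεpos : 0 < ε := by positivity
    have hball : (⇑f ⁻¹' Metric.ball (f p₁) 1) ∈ 𝓝 p₁ :=
      ((Metric.isOpen_ball).preimage (map_continuous f)).mem_nhds (by simp)
    rw [nhds_subtype_eq_comap, mem_comap] at hball
    obtain ⟨t, htn, hts⟩ := hball
    obtain ⟨W, hWt, hWo, hpW⟩ := mem_nhds_iff.1 htn
    have hW'o : IsOpen (W ∩ {s : StoneCech X | ((H s : ℝ)) < ε}) :=
      hWo.inter (isOpen_Iio.preimage hHc)
    have hpW' : p ∈ W ∩ {s : StoneCech X | ((H s : ℝ)) < ε} := ⟨hpW, by simpa [hp] using hεpos⟩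
    obtain ⟨x, hxW'⟩ := denseRange_stoneCechUnit.exists_mem_open hW'o ⟨p, hpW'⟩
    have hi : |h x - f p₁| < 1 := by
      have h1 : (⟨stoneCechUnit x, Set.mem_union_left _ (Set.mem_range_self x)⟩ :
          ↥(zetaSet X)) ∈ Subtype.val ⁻¹' t := hWt hxW'.1
      have h2 := hts h1
      simpa [Real.dist_eq] using h2
    have hi' : |h x| < |f p₁| + 1 := by
      have := abs_sub_abs_le_abs_sub (h x) (f p₁)
      linarith
    have hii : 1 / (1 + |h x|) < ε := by rw [← hHu x]; exact hxW'.2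
    have hlt : |f p₁| + 3 < 1 + |h x| := by
      rw [hε] at hii
      exact lt_of_one_div_lt_one_div (by positivity) hii
    linarith

lemma my_claimA {Y : Type*} [TopologicalSpace Y] [T2Space Y] [CompletelyRegularSpace Y]
    (e : X → Y) (he : IsEmbedding e) (hpsY : IsPseudocompact Y)
    (hK : IsCompact (Set.range e)ᶜ)
    {p : StoneCech X} (hp : p ∈ closure (upsilonSet X)ᶜ) :
    stoneCechExtend (continuous_stoneCechUnit.comp he.continuous) p ∈
      Set.range (stoneCechUnit : Y → StoneCech Y) := by
  set F := stoneCechExtend (continuous_stoneCechUnit.comp he.continuous) with hF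
  have hFc : Continuous F := continuous_stoneCechExtend _
  have hFu : ∀ x : X, F (stoneCechUnit x) = stoneCechUnit (e x) :=
    fun x => congrFun (stoneCechExtend_extends _) x
  by_contra hFp
  have hKcl : IsClosed (stoneCechUnit '' (Set.range e)ᶜ : Set (StoneCech Y)) :=
    (hK.image continuous_stoneCechUnit).isClosed
  have hdisjK : Disjoint (stoneCechUnit '' (Set.range e)ᶜ : Set (StoneCech Y)) {F p} := by
    rw [Set.disjoint_singleton_right]
    rintro ⟨y, -, hy⟩
    exact hFp ⟨y, hy⟩
  obtain ⟨f, hf0, hf1, hf01⟩ :=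
    exists_continuous_zero_one_of_isClosed hKcl isClosed_singleton hdisjK
  have hNopen : IsOpen {t : StoneCech X | 1/2 < f (F t)} :=
    isOpen_Ioi.preimage ((map_continuous f).comp hFc)
  have hpN : (1:ℝ)/2 < f (F p) := by
    have h1 := hf1 (Set.mem_singleton (F p))
    rw [Pi.one_apply] at h1
    rw [h1]; norm_num
  obtain ⟨r, hrN, hrU⟩ : ∃ r, (1/2 < f (F r)) ∧ r ∈ (upsilonSet X)ᶜ := by
    obtain ⟨t, h1, h2⟩ := mem_closure_iff.1 hp _ hNopen hpN
    exact ⟨t, h1, h2⟩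
  have hrU' := hrU
  simp only [Set.mem_compl_iff, upsilonSet, Set.mem_setOf_eq] at hrU'
  push_neg at hrU'
  obtain ⟨Z, hZzero, hrZ, hZX⟩ := hrU'
  obtain ⟨k₀, rfl⟩ := hZzero
  have hk₀X : ∀ x : X, k₀ (stoneCechUnit x) ≠ 0 := by
    intro x h0
    have hmem : stoneCechUnit x ∈ (⇑k₀ ⁻¹' {0} : Set (StoneCech X)) ∩ Set.range stoneCechUnit :=
      ⟨by simpa using h0, Set.mem_range_self x⟩
    rw [hZX] at hmem
    exact hmem
  set k : StoneCech X → ℝ := fun t => |k₀ t| + max (1/2 - f (F t)) 0 with hk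
  have hkc : Continuous k := ((map_continuous k₀).abs).add
    ((continuous_const.sub ((map_continuous f).comp hFc)).max continuous_const)
  have hkr : k r = 0 := by
    have h1 : k₀ r = 0 := by simpa using hrZ
    have h2 : max (1/2 - f (F r)) 0 = 0 := max_eq_right (by linarith)
    have h3 : k r = |k₀ r| + max (1/2 - f (F r)) 0 := rfl
    rw [h3, h1, abs_zero, h2, add_zero]
  have hkX : ∀ x : X, 0 < k (stoneCechUnit x) := fun x =>
    add_pos_of_pos_of_nonneg (abs_pos.2 (hk₀X x)) (le_max_right _ _)
  set w : StoneCech Y → ℝ := fun y => max (f y - 1/4) 0 with hw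
  have hwc : Continuous w := ((map_continuous f).sub continuous_const).max continuous_const
  set φX : X → ℝ := fun x => w (stoneCechUnit (e x)) / k (stoneCechUnit x) with hφX
  have hφXc : Continuous φX := (hwc.comp (continuous_stoneCechUnit.comp he.continuous)).div
    (hkc.comp continuous_stoneCechUnit) (fun x => (hkX x).ne')
  set Φ : Y → ℝ := Function.extend e φX (fun _ => 0) with hΦ
  have hΦe : ∀ x, Φ (e x) = φX x := fun x => he.injective.extend_apply _ _ x
  have hΦK : ∀ y, y ∉ Set.range e → Φ y = 0 := fun y hy => Function.extend_apply' _ _ _ hy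
  have hreo : IsOpen (Set.range e) := by
    have h1 := hK.isClosed.isOpen_compl
    rwa [compl_compl] at h1
  have hΦsmall : ∀ y : Y, f (stoneCechUnit y) < 1/4 → Φ y = 0 := by
    intro y hy
    by_cases hyr : y ∈ Set.range e
    · obtain ⟨x, rfl⟩ := hyr
      rw [hΦe]
      have hw0 : w (stoneCechUnit (e x)) = 0 := max_eq_right (by linarith)
      rw [hφX]
      simp only [hw0, zero_div]
    · exact hΦK y hyr
  have hΦcont : Continuous Φ := by
    rw [continuous_iff_continuousAt]
    intro y
    by_cases hyr : y ∈ Set.range e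
    · obtain ⟨x, rfl⟩ := hyr
      have hoe : IsOpenEmbedding e := ⟨he, hreo⟩
      rw [← hoe.continuousAt_iff]
      have heq : Φ ∘ e = φX := funext hΦe
      rw [heq]
      exact hφXc.continuousAt
    · have hy0 : f (stoneCechUnit y) = 0 := by
        have h1 := hf0 (Set.mem_image_of_mem _ hyr)
        simpa using h1
      have hmem : {z : Y | f (stoneCechUnit z) < 1/4} ∈ 𝓝 y := by
        refine (isOpen_Iio.preimage
          ((map_continuous f).comp continuous_stoneCechUnit)).mem_nhds ?_
        show f (stoneCechUnit y) < 1/4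
        rw [hy0]; norm_num
      exact Filter.EventuallyEq.continuousAt
        (Filter.eventually_of_mem hmem fun z hz => hΦsmall z hz)
  obtain ⟨M, hM⟩ := hpsY ⟨Φ, hΦcont⟩
  set M' : ℝ := max M 0 with hM'
  set ε : ℝ := 1 / (4 * (M' + 1)) with hε
  have hM'0 : 0 ≤ M' := le_max_right _ _
  have hεpos : 0 < ε := by positivity
  have hOopen : IsOpen {t : StoneCech X | k t < ε ∧ 1/2 < f (F t)} :=
    (isOpen_Iio.preimage hkc).inter hNopen
  have hrO : r ∈ {t : StoneCech X | k t < ε ∧ 1/2 < f (F t)} :=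
    ⟨by rw [hkr]; exact hεpos, hrN⟩
  obtain ⟨x, hx1, hx2⟩ := denseRange_stoneCechUnit.exists_mem_open hOopen ⟨r, hrO⟩
  have hwx : 1/4 ≤ w (stoneCechUnit (e x)) := by
    rw [← hFu x]
    exact le_trans (by linarith) (le_max_left _ _)
  have hkx := hkX x
  have hgt : M' + 1 ≤ Φ (e x) := by
    rw [hΦe x, hφX]
    have h1 : M' + 1 = (1/4) / ε := by
      rw [hε]
      field_simp
    rw [h1]
    exact div_le_div₀ (le_trans (by norm_num) hwx) hwx hkx (le_of_lt hx1)
  have h2 : Φ (e x) ≤ M := le_trans (le_abs_self _) (hM (e x))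
  have h3 : M ≤ M' := le_max_left _ _
  linarith

end Aux

universe u

/-- Let `X` be a locally pseudocompact Tychonoff space. Then `ζX` is the largest, w.r.t. the
partial order `≤` on extensions, among all pseudocompactifications of `X` with compact
remainder: `ζX` is itself a pseudocompactification of `X` with compact remainder, and for
every pseudocompactification `Y` of `X` with compact remainder there is a continuous map from
`ζX` into `Y` fixing `X` pointwise (so `Y ≤ ζX`). -/
theorem zetaSet_largest_pseudocompactification (X : Type u) [TopologicalSpace X] [T2Space X]
    [CompletelyRegularSpace X]
    (hlp : ∀ x : X, ∃ U : Set X, IsOpen U ∧ x ∈ U ∧ IsPseudocompactSet (closure U)) :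
    Set.range (stoneCechUnit : X → StoneCech X) ⊆ zetaSet X ∧
    zetaSet X ⊆ closure (Set.range (stoneCechUnit : X → StoneCech X)) ∧
    IsPseudocompactSet (zetaSet X) ∧
    IsCompact (zetaSet X \ Set.range (stoneCechUnit : X → StoneCech X)) ∧
    ∀ (Y : Type u) [TopologicalSpace Y] [T2Space Y] [CompletelyRegularSpace Y]
      (e : X → Y), IsEmbedding e → DenseRange e → IsPseudocompact Y →
        IsCompact (Set.range e)ᶜ →
        ∃ g : zetaSet X → Y, Continuous g ∧
          ∀ (x : X) (hx : stoneCechUnit x ∈ zetaSet X), g ⟨stoneCechUnit x, hx⟩ = e x := by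
  have hdisj : ∀ x : X, stoneCechUnit x ∉ closure (upsilonSet X)ᶜ :=
    my_unit_notin_closure_compl hlp
  refine ⟨Set.subset_union_left, ?_, ?_, ?_, ?_⟩
  · rw [denseRange_stoneCechUnit.closure_eq]
    exact Set.subset_univ _
  · intro f
    obtain ⟨M1, hM1⟩ := my_bound_on_X f
    have hCsub : closure (upsilonSet X)ᶜ ⊆ zetaSet X := Set.subset_union_right
    have hScomp : IsCompact (Subtype.val ⁻¹' closure (upsilonSet X)ᶜ : Set ↥(zetaSet X)) := by
      rw [IsEmbedding.subtypeVal.isCompact_iff]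
      have himg : Subtype.val '' (Subtype.val ⁻¹' closure (upsilonSet X)ᶜ : Set ↥(zetaSet X))
          = closure (upsilonSet X)ᶜ := by
        rw [Subtype.image_preimage_coe]
        exact Set.inter_eq_self_of_subset_right hCsub
      rw [himg]
      exact isClosed_closure.isCompact
    obtain ⟨M2, hM2⟩ := hScomp.exists_bound_of_continuousOn (map_continuous f).continuousOn
    refine ⟨max M1 M2, fun z => ?_⟩
    rcases z.2 with hz | hz
    · obtain ⟨x, hx⟩ := hz
      have hzz : z = ⟨stoneCechUnit x, Set.mem_union_left _ (Set.mem_range_self x)⟩ :=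
        Subtype.ext hx.symm
      rw [hzz]
      exact le_trans (hM1 x) (le_max_left _ _)
    · have hb := hM2 z hz
      rw [Real.norm_eq_abs] at hb
      exact le_trans hb (le_max_right _ _)
  · have heq : zetaSet X \ Set.range (stoneCechUnit : X → StoneCech X)
        = closure (upsilonSet X)ᶜ := by
      apply Set.Subset.antisymm
      · rintro t ⟨ht1 | ht1, ht2⟩
        · exact absurd ht1 ht2
        · exact ht1
      · intro t ht
        refine ⟨Set.mem_union_right _ ht, ?_⟩
        rintro ⟨x, rfl⟩
        exact hdisj x ht
    rw [heq]
    exact isClosed_closure.isCompact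
  · intro Y tY t2Y crY e he hde hpsY hK
    have hcont : Continuous (stoneCechUnit ∘ e) := continuous_stoneCechUnit.comp he.continuous
    have hFu : ∀ x : X, stoneCechExtend hcont (stoneCechUnit x) = stoneCechUnit (e x) :=
      fun x => congrFun (stoneCechExtend_extends hcont) x
    have hmem : ∀ z : ↥(zetaSet X),
        stoneCechExtend hcont z.val ∈ Set.range (stoneCechUnit : Y → StoneCech Y) := by
      intro z
      rcases z.2 with hz | hz
      · obtain ⟨x, hx⟩ := hz
        rw [← hx, hFu]
        exact Set.mem_range_self _
      · exact my_claimA e he hpsY hK hz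
    choose g hg using hmem
    have hYemb : IsEmbedding (stoneCechUnit : Y → StoneCech Y) := my_isEmbedding_unit
    refine ⟨g, ?_, ?_⟩
    · rw [hYemb.toIsInducing.continuous_iff]
      have hcomp : (stoneCechUnit ∘ g : ↥(zetaSet X) → StoneCech Y)
          = fun z => stoneCechExtend hcont z.val := funext hg
      rw [hcomp]
      exact (continuous_stoneCechExtend hcont).comp continuous_subtype_val
    · intro x hx
      apply hYemb.injective
      rw [hg ⟨stoneCechUnit x, hx⟩]
      exact hFu x
end
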